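/- arXiv:2207.06504 — 6 statements merged into one kernel-verified Lean document; each statement's English description precedes it below -/
import Mathlib

section
/- Let g be an aligned history-dependent game with reference static game ĝ, and let P be a local and monotone asynchronous learning rule. Then for every finite history α and every a ∈ A with a ≤ α^T componentwise, there exists a monotone coupling of the one-step transition distributions P̂^a and P^α, i.e., a probability measure ℙ on A × A with ℙ(x,y) = 0 unless x ≤ y, Σ_{x: x ≤ y'} ℙ(x,y') = P^α(y') for every y' ∈ A, and Σ_{y: y ≥ x'} ℙ(x',y) = P̂^a(x') for every x' ∈ A. -/
open scoped Classical
open Finset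

abbrev Profile (n : ℕ) := Fin n → Bool
abbrev UtilProfile (n : ℕ) := Fin n → Profile n → ℝ
abbrev Rule (n : ℕ) := Profile n → Profile n → UtilProfile n → ℝ

/-- `P` is an individual learning rule for agent `i`: it maps into `[0,1]`, is a
probability measure over next profiles, and only agent `i` may change its action. -/
def IsIndividual {n : ℕ} (i : Fin n) (P : Rule n) : Prop :=
  (∀ (a : Profile n) (U : UtilProfile n), ∑ b : Profile n, P a b U = 1) ∧
  (∀ (a b : Profile n) (U : UtilProfile n), 0 ≤ P a b U ∧ P a b U ≤ 1) ∧
  (∀ (a b : Profile n) (U : UtilProfile n), (∃ j, j ≠ i ∧ a j ≠ b j) → P a b U = 0)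

/-- `P` is local: the transition probability only depends on the selected action of `i`
and the pair of payoffs `(U_i(0,a_{-i}), U_i(1,a_{-i}))`. -/
def IsLocalRule {n : ℕ} (i : Fin n) (P : Rule n) : Prop :=
  ∃ Pbar : Bool → ℝ × ℝ → ℝ,
    ∀ (a : Profile n) (b : Bool) (U : UtilProfile n),
      P a (Function.update a i b) U
        = Pbar b (U i (Function.update a i false), U i (Function.update a i true))

/-- The utility profile obtained from `U` by adding `l` to agent `i`'s utility on
profiles where `i` plays `b`. -/
def bump {n : ℕ} (i : Fin n) (U : UtilProfile n) (b : Bool) (l : ℝ) : UtilProfile n :=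
  Function.update U i (fun x => if x i = b then U i x + l else U i x)

/-- `P` is monotone with respect to utility. -/
def IsMonotoneRule {n : ℕ} (i : Fin n) (P : Rule n) : Prop :=
  ∀ (U : UtilProfile n) (b : Bool) (l : ℝ), 0 ≤ l → ∀ a : Profile n,
    P a (Function.update a i b) U ≤ P a (Function.update a i b) (bump i U b l)

/-- The asynchronous learning rule built from individual learning rules. -/
noncomputable def asyncRule {n : ℕ} (Pvec : Fin n → Rule n) : Rule n :=
  fun a b U => (1 / (n : ℝ)) * ∑ i : Fin n, Pvec i a b U

/-- A finite (nonempty) history of action profiles; `⟨T, α⟩` has length `T+1`. -/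
abbrev Hist (n : ℕ) := Σ T : ℕ, (Fin (T + 1) → Profile n)

/-- The last action profile of a history. -/
def lastProf {n : ℕ} (h : Hist n) : Profile n := h.2 (Fin.last h.1)

/-- `Uh` is an aligned history-dependent game with reference static game `Uhat`. -/
def Aligned {n : ℕ} (Uh : Hist n → UtilProfile n) (Uhat : UtilProfile n) : Prop :=
  ∀ (h : Hist n) (a : Profile n) (i : Fin n),
    (∀ j, j ≠ i → a j ≤ lastProf h j) →
    Uhat i (Function.update a i true) ≤ Uh h i (Function.update (lastProf h) i true) ∧
    Uh h i (Function.update (lastProf h) i false) ≤ Uhat i (Function.update a i false)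

/-- A monotone coupling of the probability measures `p1` (lower) and `p2` (upper). -/
def IsMonotoneCoupling {X : Type*} [Fintype X] [PartialOrder X]
    (p1 p2 : X → ℝ) (p : X → X → ℝ) : Prop :=
  (∀ x y, 0 ≤ p x y) ∧
  (∑ x : X, ∑ y : X, p x y) = 1 ∧
  (∀ x y, ¬ x ≤ y → p x y = 0) ∧
  (∀ y, ∑ x ∈ Finset.univ.filter (fun x => x ≤ y), p x y = p2 y) ∧
  (∀ x, ∑ y ∈ Finset.univ.filter (fun y => x ≤ y), p x y = p1 x)

-- AUX LEMMAS

lemma eq_update_self_iff {n : ℕ} (i : Fin n) (c b : Profile n) :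
    b = Function.update c i (b i) ↔ ∀ j, j ≠ i → b j = c j := by
  constructor
  · intro hb j hj
    conv_lhs => rw [hb]
    exact Function.update_of_ne hj _ _
  · intro hb
    funext j
    by_cases hj : j = i
    · subst hj; simp
    · rw [Function.update_of_ne hj]; exact hb j hj

lemma zero_off {n : ℕ} {i : Fin n} {P : Rule n} (hI : IsIndividual i P)
    (c x : Profile n) (U : UtilProfile n) (hx : x ≠ Function.update c i (x i)) :
    P c x U = 0 := by
  apply hI.2.2
  have := (not_iff_not.mpr (eq_update_self_iff i c x)).1 hx
  push_neg at this
  obtain ⟨j, hj, hne⟩ := this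
  exact ⟨j, hj, hne.symm⟩

lemma sum_update_ite {n : ℕ} (i : Fin n) (c : Profile n) (f : Bool → ℝ) :
    ∑ x : Profile n, (if x = Function.update c i (x i) then f (x i) else 0)
      = f false + f true := by
  have hne : Function.update c i false ≠ Function.update c i true := by
    intro e
    have := congrFun e i
    simp at this
  have hmem : ∀ x : Profile n,
      (x = Function.update c i (x i)) ↔
        x ∈ ({Function.update c i false, Function.update c i true} : Finset (Profile n)) := by
    intro x
    constructor
    · intro hx
      rcases Bool.dichotomy (x i) with hb | hb <;> rw [hb] at hx <;> simp [hx]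
    · intro hx
      simp only [Finset.mem_insert, Finset.mem_singleton] at hx
      rcases hx with hx | hx <;> (rw [hx]; simp)
  calc ∑ x : Profile n, (if x = Function.update c i (x i) then f (x i) else 0)
      = ∑ x : Profile n,
          (if x ∈ ({Function.update c i false, Function.update c i true} : Finset (Profile n))
            then f (x i) else 0) := by
        exact Finset.sum_congr rfl fun x _ => if_congr (hmem x) rfl rfl
    _ = ∑ x ∈ ({Function.update c i false, Function.update c i true} : Finset (Profile n)),
          f (x i) := by
        rw [Finset.sum_ite_mem, Finset.univ_inter]
    _ = f false + f true := by
        rw [Finset.sum_pair hne]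
        simp

lemma indiv_sum_two {n : ℕ} {i : Fin n} {P : Rule n} (hI : IsIndividual i P)
    (c : Profile n) (U : UtilProfile n) :
    P c (Function.update c i false) U + P c (Function.update c i true) U = 1 := by
  have h1 := hI.1 c U
  have hrw : ∑ x : Profile n, P c x U
      = ∑ x : Profile n,
          (if x = Function.update c i (x i) then P c (Function.update c i (x i)) U else 0) := by
    refine Finset.sum_congr rfl fun x _ => ?_
    by_cases hx : x = Function.update c i (x i)
    · rw [if_pos hx, ← hx]
    · rw [if_neg hx, zero_off hI c x U hx]
  rw [hrw, sum_update_ite i c (fun b => P c (Function.update c i b) U)] at h1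
  exact h1

lemma key_mono {n : ℕ} {i : Fin n} {P : Rule n}
    (hI : IsIndividual i P) (hL : IsLocalRule i P) (hM : IsMonotoneRule i P)
    (c d : Profile n) (U V : UtilProfile n)
    (h1 : U i (Function.update c i true) ≤ V i (Function.update d i true))
    (h0 : V i (Function.update d i false) ≤ U i (Function.update c i false)) :
    P c (Function.update c i true) U ≤ P d (Function.update d i true) V := by
  obtain ⟨F, hF⟩ := hL
  rw [hF c true U, hF d true V]
  set W : ℝ → ℝ → UtilProfile n := fun p q => fun _ x => if x i then q else p with hW
  have hWval : ∀ p q b, P c (Function.update c i b) (W p q) = F b (p, q) := by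
    intro p q b
    rw [hF]
    simp [hW]
  have hsum : ∀ p q, F false (p, q) + F true (p, q) = 1 := by
    intro p q
    have h2 := indiv_sum_two hI c (W p q)
    rw [hWval, hWval] at h2
    exact h2
  have mono1 : ∀ p q l, 0 ≤ l → F true (p, q) ≤ F true (p, q + l) := by
    intro p q l hl
    have h2 := hM (W p q) true l hl c
    rw [hF, hF] at h2
    simpa [hW, bump] using h2
  have mono0 : ∀ p q l, 0 ≤ l → F false (p, q) ≤ F false (p + l, q) := by
    intro p q l hl
    have h2 := hM (W p q) false l hl c
    rw [hF, hF] at h2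
    simpa [hW, bump] using h2
  have main : ∀ u0 u1 v0 v1 : ℝ, u1 ≤ v1 → v0 ≤ u0 →
      F true (u0, u1) ≤ F true (v0, v1) := by
    intro u0 u1 v0 v1 hv1 hv0
    have step1 : F true (u0, u1) ≤ F true (u0, v1) := by
      have h2 := mono1 u0 u1 (v1 - u1) (by linarith)
      rwa [show u1 + (v1 - u1) = v1 by ring] at h2
    have step2 : F true (u0, v1) ≤ F true (v0, v1) := by
      have h2 := mono0 v0 v1 (u0 - v0) (by linarith)
      rw [show v0 + (u0 - v0) = u0 by ring] at h2
      have s1 := hsum u0 v1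
      have s2 := hsum v0 v1
      linarith
    linarith
  exact main _ _ _ _ h1 h0

/-- For an aligned history-dependent game with a local and monotone asynchronous
learning rule, a monotone coupling exists between the one-step transition measures
`P̂^a` and `P^α` whenever `a ≤ α^T`. -/
theorem one_step_monotone_coupling (n : ℕ) (hn : 1 ≤ n) (Pvec : Fin n → Rule n)
    (hP : ∀ i, IsIndividual i (Pvec i) ∧ IsLocalRule i (Pvec i) ∧ IsMonotoneRule i (Pvec i))
    (Uh : Hist n → UtilProfile n) (Uhat : UtilProfile n) (hA : Aligned Uh Uhat)
    (h : Hist n) (a : Profile n) (ha : a ≤ lastProf h) :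
    ∃ p : Profile n → Profile n → ℝ,
      IsMonotoneCoupling (fun x => asyncRule Pvec a x Uhat)
        (fun y => asyncRule Pvec (lastProf h) y (Uh h)) p := by
  classical
  set α := lastProf h with hα
  set U := Uh h with hUdef
  have hn0 : (n : ℝ) ≠ 0 := by
    have : (0 : ℝ) < n := by exact_mod_cast Nat.lt_of_lt_of_le Nat.zero_lt_one hn
    exact ne_of_gt this
  -- per-agent quantities
  set Q : Fin n → Bool → ℝ := fun i b => Pvec i a (Function.update a i b) Uhat with hQ
  set R : Fin n → Bool → ℝ := fun i b => Pvec i α (Function.update α i b) U with hR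
  have hQ0 : ∀ i b, 0 ≤ Q i b := fun i b => ((hP i).1.2.1 _ _ _).1
  have hR0 : ∀ i b, 0 ≤ R i b := fun i b => ((hP i).1.2.1 _ _ _).1
  have hQsum : ∀ i, Q i false + Q i true = 1 := fun i => indiv_sum_two (hP i).1 a Uhat
  have hRsum : ∀ i, R i false + R i true = 1 := fun i => indiv_sum_two (hP i).1 α U
  have hQR : ∀ i, Q i true ≤ R i true := by
    intro i
    have hja : ∀ j, j ≠ i → a j ≤ α j := fun j _ => ha j
    obtain ⟨h1, h0⟩ := hA h a i hja
    exact key_mono (hP i).1 (hP i).2.1 (hP i).2.2 a α Uhat U h1 h0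
  set m : Fin n → Bool → Bool → ℝ := fun i x y =>
    if x then (if y then Q i true else 0) else (if y then R i true - Q i true else R i false)
    with hm
  have hm0 : ∀ i x y, 0 ≤ m i x y := by
    intro i x y
    cases x <;> cases y <;> simp [hm] <;>
      linarith [hQR i, hQ0 i true, hR0 i false, hR0 i true]
  have hmrow : ∀ i (x : Bool), m i x false + m i x true = Q i x := by
    intro i x
    cases x <;> simp [hm] <;> linarith [hQsum i, hRsum i]
  have hmcol : ∀ i (y : Bool), m i false y + m i true y = R i y := by
    intro i y
    cases y <;> simp [hm] <;> linarith [hQsum i, hRsum i]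
  set p : Profile n → Profile n → ℝ := fun x y =>
    (1 / (n : ℝ)) * ∑ i : Fin n,
      (if x = Function.update a i (x i) ∧ y = Function.update α i (y i)
        then m i (x i) (y i) else 0) with hp
  -- nonnegativity
  have hnonneg : ∀ x y, 0 ≤ p x y := by
    intro x y
    apply mul_nonneg (by positivity)
    refine Finset.sum_nonneg fun i _ => ?_
    split
    · exact hm0 i _ _
    · exact le_rfl
  -- vanishing off the order
  have hvan : ∀ x y, ¬ x ≤ y → p x y = 0 := by
    intro x y hxy
    have hterm : ∀ i : Fin n,
        (if x = Function.update a i (x i) ∧ y = Function.update α i (y i)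
          then m i (x i) (y i) else 0) = 0 := by
      intro i
      by_cases hc : x = Function.update a i (x i) ∧ y = Function.update α i (y i)
      · rw [if_pos hc]
        rw [Pi.le_def] at hxy
        push_neg at hxy
        obtain ⟨j, hj⟩ := hxy
        have hxj : x j = true ∧ y j = false := by
          revert hj
          cases hx' : x j <;> cases hy' : y j <;> simp
        by_cases hji : j = i
        · subst hji
          rw [hxj.1, hxj.2]
          simp [hm]
        · exfalso
          have e1 : x j = a j := by
            have := congrFun hc.1 j
            rwa [Function.update_of_ne hji] at this
          have e2 : y j = α j := by
            have := congrFun hc.2 j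
            rwa [Function.update_of_ne hji] at this
          have := ha j
          rw [← e1, ← e2, hxj.1, hxj.2] at this
          exact absurd this (by simp)
      · rw [if_neg hc]
    simp only [hp]
    rw [Finset.sum_eq_zero fun i _ => hterm i, mul_zero]
  -- column marginal (over x) equals the history-game transition
  have hcol : ∀ y, (∑ x : Profile n, p x y) = asyncRule Pvec α y U := by
    intro y
    simp only [hp]
    rw [← Finset.mul_sum, Finset.sum_comm]
    show (1 / (n : ℝ)) * _ = (1 / (n : ℝ)) * ∑ i : Fin n, Pvec i α y U
    congr 1
    refine Finset.sum_congr rfl fun i _ => ?_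
    by_cases hy : y = Function.update α i (y i)
    · rw [Finset.sum_congr rfl fun x _ => if_congr (and_iff_left hy) rfl rfl,
        sum_update_ite i a (fun b => m i b (y i)), hmcol i (y i)]
      simp only [hR]
      rw [← hy]
    · rw [Finset.sum_eq_zero fun x _ => if_neg (fun hc => hy hc.2),
        zero_off (hP i).1 α y U hy]
  -- row marginal (over y) equals the static-game transition
  have hrow : ∀ x, (∑ y : Profile n, p x y) = asyncRule Pvec a x Uhat := by
    intro x
    simp only [hp]
    rw [← Finset.mul_sum, Finset.sum_comm]
    show (1 / (n : ℝ)) * _ = (1 / (n : ℝ)) * ∑ i : Fin n, Pvec i a x Uhat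
    congr 1
    refine Finset.sum_congr rfl fun i _ => ?_
    by_cases hx : x = Function.update a i (x i)
    · rw [Finset.sum_congr rfl fun y _ => if_congr (and_iff_right hx) rfl rfl,
        sum_update_ite i α (fun b => m i (x i) b), hmrow i (x i)]
      simp only [hQ]
      rw [← hx]
    · rw [Finset.sum_eq_zero fun y _ => if_neg (fun hc => hx hc.1),
        zero_off (hP i).1 a x Uhat hx]
  -- total mass
  have htot : (∑ x : Profile n, ∑ y : Profile n, p x y) = 1 := by
    rw [Finset.sum_congr rfl fun x _ => hrow x]
    show ∑ x : Profile n, (1 / (n : ℝ)) * ∑ i : Fin n, Pvec i a x Uhat = 1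
    rw [← Finset.mul_sum, Finset.sum_comm]
    rw [Finset.sum_congr rfl fun i _ => (hP i).1.1 a Uhat]
    simp [hn0]
  refine ⟨p, hnonneg, htot, hvan, ?_, ?_⟩
  · intro y
    rw [Finset.sum_subset (Finset.filter_subset _ Finset.univ)
      (fun x _ hx => hvan x y (by simpa using hx))]
    exact hcol y
  · intro x
    rw [Finset.sum_subset (Finset.filter_subset _ Finset.univ)
      (fun y _ hy => hvan x y (by simpa using hy))]
    exact hrow x
end

section
/- Let g be an aligned history-dependent game with reference static game ĝ, let P be a local and monotone asynchronous learning rule, let π be a probability distribution on A, and let T ≥ 1. Then there exists a monotone coupling of the path measures P̂_π and P_π on A_T = A^T (ordered componentwise), i.e., a probability measure ℙ on A_T × A_T with ℙ(α,ᾱ) = 0 unless α ≤ ᾱ, Σ_{α: α ≤ ᾱ'} ℙ(α,ᾱ') = P_π(ᾱ') for every ᾱ', and Σ_{ᾱ: ᾱ ≥ α'} ℙ(α',ᾱ) = P̂_π(α') for every α'. -/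
open scoped Classical
open Finset

/-- The prefix `α^{≤t}` of a path `α` (a history of length `t+1`). -/
def prefixHist {n T : ℕ} (α : Fin (T + 1) → Profile n) (t : Fin T) : Hist n :=
  ⟨t.1, fun s => α (Fin.castLE (Nat.succ_le_succ t.isLt.le) s)⟩


section AuxCoupling

variable {n : ℕ}

lemma update_ne_update (a : Profile n) (i : Fin n) :
    Function.update a i false ≠ Function.update a i true := by
  intro h
  have := congrFun h i
  simp at this

lemma update_le_update {a b : Profile n} (i : Fin n) (hab : ∀ j, a j ≤ b j)
    {c c' : Bool} (hcc : c ≤ c') :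
    ∀ j, Function.update a i c j ≤ Function.update b i c' j := by
  intro j
  rcases eq_or_ne j i with rfl | h
  · simp [hcc]
  · simpa [Function.update_of_ne h] using hab j

lemma off_diag (i : Fin n) (b y : Profile n)
    (h2 : y ≠ Function.update b i false) (h1 : y ≠ Function.update b i true) :
    ∃ j, j ≠ i ∧ b j ≠ y j := by
  by_contra hc
  push_neg at hc
  have hb' : y = Function.update b i (y i) := by
    funext j
    rcases eq_or_ne j i with rfl | h
    · simp
    · rw [Function.update_of_ne h]; exact (hc j h).symm
  cases h : y i
  · rw [h] at hb'; exact h2 hb'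
  · rw [h] at hb'; exact h1 hb'

lemma two_point {i : Fin n} {P : Rule n} (hP : IsIndividual i P) (a : Profile n)
    (U : UtilProfile n) :
    P a (Function.update a i false) U + P a (Function.update a i true) U = 1 := by
  have hzero : ∀ b ∈ (Finset.univ : Finset (Profile n)),
      b ∉ ({Function.update a i false, Function.update a i true} : Finset (Profile n)) →
      P a b U = 0 := by
    intro b _ hb
    refine hP.2.2 a b U ?_
    have hb1 : b ≠ Function.update a i false := by
      intro h; exact hb (by simp [h])
    have hb2 : b ≠ Function.update a i true := by
      intro h; exact hb (by simp [h])
    obtain ⟨j, hj, hne⟩ := off_diag i a b hb1 hb2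
    exact ⟨j, hj, hne⟩
  rw [← hP.1 a U, ← Finset.sum_subset (Finset.subset_univ _) hzero,
    Finset.sum_pair (update_ne_update a i)]

lemma local_mono {i : Fin n} {P : Rule n} (hInd : IsIndividual i P)
    (hLoc : IsLocalRule i P) (hMon : IsMonotoneRule i P) (a b : Profile n)
    (U V : UtilProfile n)
    (h1 : U i (Function.update a i true) ≤ V i (Function.update b i true))
    (h0 : V i (Function.update b i false) ≤ U i (Function.update a i false)) :
    P a (Function.update a i true) U ≤ P b (Function.update b i true) V := by
  obtain ⟨Pbar, hPbar⟩ := hLoc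
  have monoT : ∀ x0 x1 l : ℝ, 0 ≤ l → Pbar true (x0, x1) ≤ Pbar true (x0, x1 + l) := by
    intro x0 x1 l hl
    set W : UtilProfile n := fun _ x => if x i = true then x1 else x0 with hW
    have hm := hMon W true l hl a
    rw [hPbar a true W, hPbar a true (bump i W true l)] at hm
    have e1 : W i (Function.update a i false) = x0 := by simp [hW]
    have e2 : W i (Function.update a i true) = x1 := by simp [hW]
    have e3 : (bump i W true l) i (Function.update a i false) = x0 := by
      simp [bump, hW]
    have e4 : (bump i W true l) i (Function.update a i true) = x1 + l := by
      simp [bump, hW]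
    rwa [e1, e2, e3, e4] at hm
  have monoF : ∀ x0 x1 l : ℝ, 0 ≤ l → Pbar false (x0, x1) ≤ Pbar false (x0 + l, x1) := by
    intro x0 x1 l hl
    set W : UtilProfile n := fun _ x => if x i = true then x1 else x0 with hW
    have hm := hMon W false l hl a
    rw [hPbar a false W, hPbar a false (bump i W false l)] at hm
    have e1 : W i (Function.update a i false) = x0 := by simp [hW]
    have e2 : W i (Function.update a i true) = x1 := by simp [hW]
    have e3 : (bump i W false l) i (Function.update a i false) = x0 + l := by
      simp [bump, hW]
    have e4 : (bump i W false l) i (Function.update a i true) = x1 := by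
      simp [bump, hW]
    rwa [e1, e2, e3, e4] at hm
  have total : ∀ x0 x1 : ℝ, Pbar false (x0, x1) + Pbar true (x0, x1) = 1 := by
    intro x0 x1
    set W : UtilProfile n := fun _ x => if x i = true then x1 else x0 with hW
    have h2 := two_point hInd a W
    rw [hPbar a false W, hPbar a true W] at h2
    have e1 : W i (Function.update a i false) = x0 := by simp [hW]
    have e2 : W i (Function.update a i true) = x1 := by simp [hW]
    rwa [e1, e2] at h2
  rw [hPbar a true U, hPbar b true V]
  set u0 := U i (Function.update a i false)
  set u1 := U i (Function.update a i true)
  set v0 := V i (Function.update b i false)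
  set v1 := V i (Function.update b i true)
  have s1 : Pbar true (u0, u1) ≤ Pbar true (u0, v1) := by
    have hm := monoT u0 u1 (v1 - u1) (by linarith)
    have e : u1 + (v1 - u1) = v1 := by ring
    rwa [e] at hm
  have s2 : Pbar true (u0, v1) ≤ Pbar true (v0, v1) := by
    have hm := monoF v0 v1 (u0 - v0) (by linarith)
    have e : v0 + (u0 - v0) = u0 := by ring
    rw [e] at hm
    have t1 := total u0 v1
    have t2 := total v0 v1
    linarith
  linarith

/-- The one-step coupling of the static and history kernels. -/
noncomputable def stepC (Pvec : Fin n → Rule n) (U1 U2 : UtilProfile n)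
    (a b x y : Profile n) : ℝ :=
  (1 / (n : ℝ)) * ∑ i : Fin n,
    ((if x = Function.update a i true ∧ y = Function.update b i true then
        Pvec i a (Function.update a i true) U2 else 0)
      + (if x = Function.update a i false ∧ y = Function.update b i true then
        Pvec i b (Function.update b i true) U1 - Pvec i a (Function.update a i true) U2 else 0)
      + (if x = Function.update a i false ∧ y = Function.update b i false then
        Pvec i b (Function.update b i false) U1 else 0))

lemma sum_x_stepC (Pvec : Fin n → Rule n) (hP : ∀ i, IsIndividual i (Pvec i))
    (U1 U2 : UtilProfile n) (a b y : Profile n) :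
    ∑ x : Profile n, stepC Pvec U1 U2 a b x y = asyncRule Pvec b y U1 := by
  unfold stepC asyncRule
  rw [← Finset.mul_sum]
  congr 1
  rw [Finset.sum_comm]
  refine Finset.sum_congr rfl fun i _ => ?_
  rw [Finset.sum_add_distrib, Finset.sum_add_distrib]
  simp only [ite_and, Finset.sum_ite_eq', Finset.mem_univ, if_true]
  by_cases h1 : y = Function.update b i true
  · have h2 : y ≠ Function.update b i false := by
      rw [h1]; exact (update_ne_update b i).symm
    rw [if_pos h1, if_pos h1, if_neg h2, h1]
    ring
  · by_cases h2 : y = Function.update b i false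
    · rw [if_neg h1, if_neg h1, if_pos h2, h2]
      ring
    · rw [if_neg h1, if_neg h1, if_neg h2]
      have := (hP i).2.2 b y U1 (off_diag i b y h2 h1)
      rw [this]; ring

lemma sum_y_stepC (Pvec : Fin n → Rule n) (hP : ∀ i, IsIndividual i (Pvec i))
    (U1 U2 : UtilProfile n) (a b x : Profile n) :
    ∑ y : Profile n, stepC Pvec U1 U2 a b x y = asyncRule Pvec a x U2 := by
  unfold stepC asyncRule
  rw [← Finset.mul_sum]
  congr 1
  rw [Finset.sum_comm]
  refine Finset.sum_congr rfl fun i _ => ?_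
  rw [Finset.sum_add_distrib, Finset.sum_add_distrib]
  have key : ∀ (A B : Profile n) (c : ℝ),
      (∑ y : Profile n, if x = A ∧ y = B then c else 0) = if x = A then c else 0 := by
    intro A B c
    by_cases h : x = A
    · simp [h]
    · simp [h]
  rw [key, key, key]
  by_cases h1 : x = Function.update a i true
  · have h2 : x ≠ Function.update a i false := by
      rw [h1]; exact (update_ne_update a i).symm
    rw [if_pos h1, if_neg h2, if_neg h2, h1]
    ring
  · by_cases h2 : x = Function.update a i false
    · rw [if_neg h1, if_pos h2, if_pos h2, h2]
      have tq := two_point (hP i) b U1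
      have tp := two_point (hP i) a U2
      linarith
    · rw [if_neg h1, if_neg h2, if_neg h2]
      have := (hP i).2.2 a x U2 (off_diag i a x h2 h1)
      rw [this]; ring

lemma stepC_nonneg (Pvec : Fin n → Rule n) (hP : ∀ i, IsIndividual i (Pvec i))
    (U1 U2 : UtilProfile n) (a b x y : Profile n)
    (key : ∀ i, Pvec i a (Function.update a i true) U2
      ≤ Pvec i b (Function.update b i true) U1) :
    0 ≤ stepC Pvec U1 U2 a b x y := by
  unfold stepC
  apply mul_nonneg (by positivity)
  apply Finset.sum_nonneg
  intro i _
  have h1 := ((hP i).2.1 a (Function.update a i true) U2).1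
  have h2 := ((hP i).2.1 b (Function.update b i false) U1).1
  have h3 := key i
  refine add_nonneg (add_nonneg ?_ ?_) ?_ <;> · split <;> linarith

lemma stepC_support (Pvec : Fin n → Rule n) (U1 U2 : UtilProfile n)
    {a b x y : Profile n} (hab : ∀ j, a j ≤ b j) (hxy : ¬ ∀ j, x j ≤ y j) :
    stepC Pvec U1 U2 a b x y = 0 := by
  unfold stepC
  rw [mul_eq_zero]
  right
  apply Finset.sum_eq_zero
  intro i _
  have H : ∀ c c' : Bool, c ≤ c' →
      ¬ (x = Function.update a i c ∧ y = Function.update b i c') := by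
    rintro c c' hcc ⟨rfl, rfl⟩
    exact hxy (update_le_update i hab hcc)
  rw [if_neg (H true true le_rfl), if_neg (H false true (by simp)),
    if_neg (H false false le_rfl)]
  ring

end AuxCoupling

/-- The path measure of the history-dependent game:
`P_π(α) = π(α¹) ∏_t P^{α^{≤t}}(α^{t+1})`. -/
noncomputable def pathHist {n : ℕ} (P : Rule n) (Uh : Hist n → UtilProfile n)
    (π : Profile n → ℝ) (T : ℕ) (α : Fin (T + 1) → Profile n) : ℝ :=
  π (α 0) * ∏ t : Fin T, P (α t.castSucc) (α t.succ) (Uh (prefixHist α t))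

/-- The path measure of the static game:
`P̂_π(α) = π(α¹) ∏_t P̂^{α^t}(α^{t+1})`. -/
noncomputable def pathStatic {n : ℕ} (P : Rule n) (Uhat : UtilProfile n)
    (π : Profile n → ℝ) (T : ℕ) (α : Fin (T + 1) → Profile n) : ℝ :=
  π (α 0) * ∏ t : Fin T, P (α t.castSucc) (α t.succ) Uhat


section PathCoupling

variable {n : ℕ}

/-- The path-level coupling. -/
noncomputable def pathC (Pvec : Fin n → Rule n) (Uh : Hist n → UtilProfile n)
    (Uhat : UtilProfile n) (π : Profile n → ℝ) (T : ℕ)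
    (α β : Fin (T + 1) → Profile n) : ℝ :=
  (if α 0 = β 0 then π (β 0) else 0) *
    ∏ t : Fin T, stepC Pvec (Uh (prefixHist β t)) Uhat (α t.castSucc) (β t.castSucc)
      (α t.succ) (β t.succ)

lemma sum_snoc {X M : Type*} [Fintype X] [AddCommMonoid M] (T : ℕ)
    (F : (Fin (T + 1) → X) → M) :
    ∑ f : Fin (T + 1) → X, F f = ∑ g : Fin T → X, ∑ x : X, F (Fin.snoc g x) := by
  rw [← Fintype.sum_equiv (Fin.snocEquiv (fun _ : Fin (T+1) => X))
      (fun p => F (Fin.snoc p.2 p.1)) F (fun p => rfl)]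
  rw [Fintype.sum_prod_type]
  rw [Finset.sum_comm]

lemma prefixHist_init {T : ℕ} (β : Fin (T + 2) → Profile n) (t : Fin T) :
    prefixHist β t.castSucc = prefixHist (fun s : Fin (T + 1) => β s.castSucc) t := rfl

lemma prefixHist_snoc_last {T : ℕ} (g : Fin (T + 1) → Profile n) (y : Profile n) :
    prefixHist (Fin.snoc g y : Fin (T + 2) → Profile n) (Fin.last T)
      = ⟨T, g⟩ := by
  have h : (fun s : Fin (T + 1) =>
      (Fin.snoc g y : Fin (T + 2) → Profile n)
        (Fin.castLE (Nat.succ_le_succ (Fin.last T).isLt.le) s)) = g := by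
    funext s
    have e : (Fin.castLE (Nat.succ_le_succ (Fin.last T).isLt.le) s : Fin (T + 2))
        = Fin.castSucc s := rfl
    rw [e, Fin.snoc_castSucc]
  exact congrArg (Sigma.mk T) h

lemma lastProf_prefixHist {T : ℕ} (β : Fin (T + 1) → Profile n) (t : Fin T) :
    lastProf (prefixHist β t) = β t.castSucc := rfl

lemma pathC_snoc_left {T : ℕ} (Pvec : Fin n → Rule n) (Uh : Hist n → UtilProfile n)
    (Uhat : UtilProfile n) (π : Profile n → ℝ)
    (g : Fin (T + 1) → Profile n) (x : Profile n) (β : Fin (T + 2) → Profile n) :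
    pathC Pvec Uh Uhat π (T + 1) (Fin.snoc g x) β
      = pathC Pvec Uh Uhat π T g (fun s => β s.castSucc)
        * stepC Pvec (Uh (prefixHist β (Fin.last T))) Uhat (g (Fin.last T))
          (β (Fin.last T).castSucc) x (β (Fin.last T).succ) := by
  unfold pathC
  rw [Fin.prod_univ_castSucc]
  have h0 : (Fin.snoc g x : Fin (T + 2) → Profile n) 0 = g 0 := by
    rw [show (0 : Fin (T + 2)) = Fin.castSucc 0 from rfl, Fin.snoc_castSucc]
  have hlast1 : (Fin.snoc g x : Fin (T + 2) → Profile n) (Fin.last T).castSucc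
      = g (Fin.last T) := Fin.snoc_castSucc ..
  have hlast2 : (Fin.snoc g x : Fin (T + 2) → Profile n) (Fin.last T).succ = x := by
    rw [Fin.succ_last, Fin.snoc_last]
  rw [h0, hlast1, hlast2]
  have hfac : ∀ t : Fin T,
      stepC Pvec (Uh (prefixHist β t.castSucc)) Uhat
        ((Fin.snoc g x : Fin (T + 2) → Profile n) t.castSucc.castSucc)
        (β t.castSucc.castSucc)
        ((Fin.snoc g x : Fin (T + 2) → Profile n) t.castSucc.succ) (β t.castSucc.succ)
      = stepC Pvec (Uh (prefixHist (fun s : Fin (T + 1) => β s.castSucc) t)) Uhat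
        (g t.castSucc) ((fun s : Fin (T + 1) => β s.castSucc) t.castSucc)
        (g t.succ) ((fun s : Fin (T + 1) => β s.castSucc) t.succ) := by
    intro t
    rw [Fin.snoc_castSucc, Fin.succ_castSucc, Fin.snoc_castSucc, prefixHist_init]
  rw [Finset.prod_congr rfl (fun t _ => hfac t)]
  have hz : (fun s : Fin (T + 1) => β s.castSucc) 0 = β 0 := by
    show β (Fin.castSucc 0) = β 0
    rw [Fin.castSucc_zero]
  rw [hz]
  ring

lemma pathC_snoc_right {T : ℕ} (Pvec : Fin n → Rule n) (Uh : Hist n → UtilProfile n)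
    (Uhat : UtilProfile n) (π : Profile n → ℝ)
    (α : Fin (T + 2) → Profile n) (g : Fin (T + 1) → Profile n) (y : Profile n) :
    pathC Pvec Uh Uhat π (T + 1) α (Fin.snoc g y)
      = pathC Pvec Uh Uhat π T (fun s => α s.castSucc) g
        * stepC Pvec (Uh ⟨T, g⟩) Uhat (α (Fin.last T).castSucc)
          (g (Fin.last T)) (α (Fin.last T).succ) y := by
  unfold pathC
  rw [Fin.prod_univ_castSucc]
  have h0 : (Fin.snoc g y : Fin (T + 2) → Profile n) 0 = g 0 := by
    rw [show (0 : Fin (T + 2)) = Fin.castSucc 0 from rfl, Fin.snoc_castSucc]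
  have hlast1 : (Fin.snoc g y : Fin (T + 2) → Profile n) (Fin.last T).castSucc
      = g (Fin.last T) := Fin.snoc_castSucc ..
  have hlast2 : (Fin.snoc g y : Fin (T + 2) → Profile n) (Fin.last T).succ = y := by
    rw [Fin.succ_last, Fin.snoc_last]
  rw [h0, hlast1, hlast2, prefixHist_snoc_last]
  have hinit : (fun s : Fin (T + 1) =>
      (Fin.snoc g y : Fin (T + 2) → Profile n) s.castSucc) = g := by
    funext s; rw [Fin.snoc_castSucc]
  have hfac : ∀ t : Fin T,
      stepC Pvec (Uh (prefixHist (Fin.snoc g y : Fin (T + 2) → Profile n) t.castSucc))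
        Uhat (α t.castSucc.castSucc)
        ((Fin.snoc g y : Fin (T + 2) → Profile n) t.castSucc.castSucc)
        (α t.castSucc.succ)
        ((Fin.snoc g y : Fin (T + 2) → Profile n) t.castSucc.succ)
      = stepC Pvec (Uh (prefixHist g t)) Uhat
        ((fun s : Fin (T + 1) => α s.castSucc) t.castSucc) (g t.castSucc)
        ((fun s : Fin (T + 1) => α s.castSucc) t.succ) (g t.succ) := by
    intro t
    rw [Fin.snoc_castSucc, Fin.succ_castSucc, Fin.snoc_castSucc, prefixHist_init, hinit]
  rw [Finset.prod_congr rfl (fun t _ => hfac t)]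
  have hz : (fun s : Fin (T + 1) => α s.castSucc) 0 = α 0 := by
    show α (Fin.castSucc 0) = α 0
    rw [Fin.castSucc_zero]
  rw [hz]
  ring

lemma pathC_sum_left (Pvec : Fin n → Rule n) (hP : ∀ i, IsIndividual i (Pvec i))
    (Uh : Hist n → UtilProfile n) (Uhat : UtilProfile n) (π : Profile n → ℝ) :
    ∀ (T : ℕ) (β : Fin (T + 1) → Profile n),
      (∑ α : Fin (T + 1) → Profile n, pathC Pvec Uh Uhat π T α β)
        = pathHist (asyncRule Pvec) Uh π T β := by
  intro T
  induction T with
  | zero =>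
    intro β
    unfold pathC pathHist
    simp only [Finset.univ_eq_empty, Finset.prod_empty, mul_one]
    have e1 : (∑ x : Fin (0 + 1) → Profile n, if x 0 = β 0 then π (β 0) else 0)
        = ∑ a : Profile n, if a = β 0 then π (β 0) else 0 :=
      Fintype.sum_equiv (Equiv.funUnique (Fin 1) (Profile n)) _ _ (fun α => rfl)
    rw [e1]
    simp
  | succ T ih =>
    intro β
    rw [sum_snoc]
    have h1 : ∀ g : Fin (T + 1) → Profile n,
        (∑ x : Profile n, pathC Pvec Uh Uhat π (T + 1) (Fin.snoc g x) β)
        = pathC Pvec Uh Uhat π T g (fun s => β s.castSucc)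
          * asyncRule Pvec (β (Fin.last T).castSucc) (β (Fin.last T).succ)
            (Uh (prefixHist β (Fin.last T))) := by
      intro g
      simp only [pathC_snoc_left]
      rw [← Finset.mul_sum, sum_x_stepC Pvec hP]
    rw [Finset.sum_congr rfl (fun g _ => h1 g), ← Finset.sum_mul, ih]
    unfold pathHist
    rw [Fin.prod_univ_castSucc]
    have hz : (fun s : Fin (T + 1) => β s.castSucc) 0 = β 0 := by
      show β (Fin.castSucc 0) = β 0
      rw [Fin.castSucc_zero]
    have hfac : ∀ t : Fin T,
        asyncRule Pvec ((fun s : Fin (T + 1) => β s.castSucc) t.castSucc)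
          ((fun s : Fin (T + 1) => β s.castSucc) t.succ)
          (Uh (prefixHist (fun s : Fin (T + 1) => β s.castSucc) t))
        = asyncRule Pvec (β t.castSucc.castSucc) (β t.castSucc.succ)
          (Uh (prefixHist β t.castSucc)) := by
      intro t
      rw [prefixHist_init, Fin.succ_castSucc]
    rw [Finset.prod_congr rfl (fun t _ => hfac t), hz]
    ring

lemma pathC_sum_right (Pvec : Fin n → Rule n) (hP : ∀ i, IsIndividual i (Pvec i))
    (Uh : Hist n → UtilProfile n) (Uhat : UtilProfile n) (π : Profile n → ℝ) :
    ∀ (T : ℕ) (α : Fin (T + 1) → Profile n),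
      (∑ β : Fin (T + 1) → Profile n, pathC Pvec Uh Uhat π T α β)
        = pathStatic (asyncRule Pvec) Uhat π T α := by
  intro T
  induction T with
  | zero =>
    intro α
    unfold pathC pathStatic
    simp only [Finset.univ_eq_empty, Finset.prod_empty, mul_one]
    have e1 : (∑ x : Fin (0 + 1) → Profile n, if α 0 = x 0 then π (x 0) else 0)
        = ∑ a : Profile n, if α 0 = a then π a else 0 :=
      Fintype.sum_equiv (Equiv.funUnique (Fin 1) (Profile n)) _ _ (fun β => rfl)
    rw [e1]
    simp
  | succ T ih =>
    intro α
    rw [sum_snoc]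
    have h1 : ∀ g : Fin (T + 1) → Profile n,
        (∑ y : Profile n, pathC Pvec Uh Uhat π (T + 1) α (Fin.snoc g y))
        = pathC Pvec Uh Uhat π T (fun s => α s.castSucc) g
          * asyncRule Pvec (α (Fin.last T).castSucc) (α (Fin.last T).succ) Uhat := by
      intro g
      simp only [pathC_snoc_right]
      rw [← Finset.mul_sum, sum_y_stepC Pvec hP]
    rw [Finset.sum_congr rfl (fun g _ => h1 g), ← Finset.sum_mul, ih]
    unfold pathStatic
    rw [Fin.prod_univ_castSucc]
    have hz : (fun s : Fin (T + 1) => α s.castSucc) 0 = α 0 := by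
      show α (Fin.castSucc 0) = α 0
      rw [Fin.castSucc_zero]
    have hfac : ∀ t : Fin T,
        asyncRule Pvec ((fun s : Fin (T + 1) => α s.castSucc) t.castSucc)
          ((fun s : Fin (T + 1) => α s.castSucc) t.succ) Uhat
        = asyncRule Pvec (α t.castSucc.castSucc) (α t.castSucc.succ) Uhat := by
      intro t
      rw [Fin.succ_castSucc]
    rw [Finset.prod_congr rfl (fun t _ => hfac t), hz]
    ring

lemma sum_asyncRule (hn : 1 ≤ n) (Pvec : Fin n → Rule n)
    (hP : ∀ i, IsIndividual i (Pvec i)) (a : Profile n) (U : UtilProfile n) :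
    ∑ b : Profile n, asyncRule Pvec a b U = 1 := by
  unfold asyncRule
  rw [← Finset.mul_sum, Finset.sum_comm]
  rw [Finset.sum_congr rfl (fun i _ => (hP i).1 a U), Finset.sum_const,
    Finset.card_univ, Fintype.card_fin, nsmul_eq_mul, mul_one]
  have hn' : (n : ℝ) ≠ 0 := Nat.cast_ne_zero.mpr (by omega)
  field_simp

lemma sum_pathStatic (hn : 1 ≤ n) (Pvec : Fin n → Rule n)
    (hP : ∀ i, IsIndividual i (Pvec i)) (Uhat : UtilProfile n)
    (π : Profile n → ℝ) (hπ2 : ∑ a : Profile n, π a = 1) :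
    ∀ T : ℕ, ∑ α : Fin (T + 1) → Profile n, pathStatic (asyncRule Pvec) Uhat π T α = 1 := by
  intro T
  induction T with
  | zero =>
    unfold pathStatic
    simp only [Finset.univ_eq_empty, Finset.prod_empty, mul_one]
    have e1 : (∑ x : Fin (0 + 1) → Profile n, π (x 0)) = ∑ a : Profile n, π a :=
      Fintype.sum_equiv (Equiv.funUnique (Fin 1) (Profile n)) _ _ (fun β => rfl)
    rw [e1, hπ2]
  | succ T ih =>
    rw [sum_snoc]
    have h1 : ∀ (g : Fin (T + 1) → Profile n) (x : Profile n),
        pathStatic (asyncRule Pvec) Uhat π (T + 1) (Fin.snoc g x)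
        = pathStatic (asyncRule Pvec) Uhat π T g
          * asyncRule Pvec (g (Fin.last T)) x Uhat := by
      intro g x
      unfold pathStatic
      rw [Fin.prod_univ_castSucc]
      have h0 : (Fin.snoc g x : Fin (T + 2) → Profile n) 0 = g 0 := by
        rw [show (0 : Fin (T + 2)) = Fin.castSucc 0 from rfl, Fin.snoc_castSucc]
      have hlast1 : (Fin.snoc g x : Fin (T + 2) → Profile n) (Fin.last T).castSucc
          = g (Fin.last T) := Fin.snoc_castSucc ..
      have hlast2 : (Fin.snoc g x : Fin (T + 2) → Profile n) (Fin.last T).succ = x := by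
        rw [Fin.succ_last, Fin.snoc_last]
      have hfac : ∀ t : Fin T,
          asyncRule Pvec ((Fin.snoc g x : Fin (T + 2) → Profile n) t.castSucc.castSucc)
            ((Fin.snoc g x : Fin (T + 2) → Profile n) t.castSucc.succ) Uhat
          = asyncRule Pvec (g t.castSucc) (g t.succ) Uhat := by
        intro t
        rw [Fin.snoc_castSucc, Fin.succ_castSucc, Fin.snoc_castSucc]
      rw [h0, hlast1, hlast2, Finset.prod_congr rfl (fun t _ => hfac t)]
      ring
    simp only [h1]
    have h2 : ∀ g : Fin (T + 1) → Profile n,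
        (∑ x : Profile n, pathStatic (asyncRule Pvec) Uhat π T g
          * asyncRule Pvec (g (Fin.last T)) x Uhat)
        = pathStatic (asyncRule Pvec) Uhat π T g := by
      intro g
      rw [← Finset.mul_sum, sum_asyncRule hn Pvec hP, mul_one]
    rw [Finset.sum_congr rfl (fun g _ => h2 g), ih]

lemma pathC_zero (Pvec : Fin n → Rule n) (Uh : Hist n → UtilProfile n)
    (Uhat : UtilProfile n) (π : Profile n → ℝ) (T : ℕ)
    (α β : Fin (T + 1) → Profile n) (h : ¬ ∀ s, α s ≤ β s) :
    pathC Pvec Uh Uhat π T α β = 0 := by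
  by_cases h0 : α 0 = β 0
  · have hex : ∃ k : ℕ, ∃ hk : k < T + 1, ¬ α ⟨k, hk⟩ ≤ β ⟨k, hk⟩ := by
      obtain ⟨s, hs⟩ := not_forall.mp h
      exact ⟨s.1, s.isLt, by simpa using hs⟩
    classical
    obtain ⟨hkm, hviol⟩ := Nat.find_spec hex
    have hm0 : Nat.find hex ≠ 0 := by
      intro hm0
      apply hviol
      have e : (⟨Nat.find hex, hkm⟩ : Fin (T + 1)) = 0 := Fin.ext (by rw [Fin.val_zero]; exact hm0)
      rw [e, h0]
    obtain ⟨k, hk⟩ := Nat.exists_eq_succ_of_ne_zero hm0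
    have hkT : k < T := by omega
    set t : Fin T := ⟨k, hkT⟩ with ht
    have hlt : k < Nat.find hex := by omega
    have hle : α t.castSucc ≤ β t.castSucc := by
      by_contra hc
      exact Nat.find_min hex hlt ⟨by omega, hc⟩
    have hnot : ¬ α t.succ ≤ β t.succ := by
      intro hc
      apply hviol
      have e : (⟨Nat.find hex, hkm⟩ : Fin (T + 1)) = t.succ := Fin.ext (by rw [Fin.val_succ]; exact hk)
      rw [e]
      exact hc
    unfold pathC
    rw [Finset.prod_eq_zero (Finset.mem_univ t)
      (stepC_support Pvec _ _ (fun j => hle j) (fun hc => hnot hc)), mul_zero]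
  · unfold pathC
    rw [if_neg h0, zero_mul]

lemma pathC_nonneg (Pvec : Fin n → Rule n)
    (hP : ∀ i, IsIndividual i (Pvec i) ∧ IsLocalRule i (Pvec i) ∧ IsMonotoneRule i (Pvec i))
    (Uh : Hist n → UtilProfile n) (Uhat : UtilProfile n) (hA : Aligned Uh Uhat)
    (π : Profile n → ℝ) (hπ : ∀ a, 0 ≤ π a) (T : ℕ)
    (α β : Fin (T + 1) → Profile n) :
    0 ≤ pathC Pvec Uh Uhat π T α β := by
  by_cases h : ∀ s, α s ≤ β s
  · unfold pathC
    apply mul_nonneg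
    · split
      · exact hπ _
      · exact le_refl 0
    · apply Finset.prod_nonneg
      intro t _
      apply stepC_nonneg Pvec (fun i => (hP i).1)
      intro i
      have hal := hA (prefixHist β t) (α t.castSucc) i
        (fun j _ => by rw [lastProf_prefixHist]; exact h t.castSucc j)
      rw [lastProf_prefixHist] at hal
      exact local_mono (hP i).1 (hP i).2.1 (hP i).2.2 _ _ _ _ hal.1 hal.2
  · rw [pathC_zero Pvec Uh Uhat π T α β h]

end PathCoupling

/-- `π` is a probability distribution on the set of action profiles. -/
def IsProb {n : ℕ} (π : Profile n → ℝ) : Prop :=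
  (∀ a, 0 ≤ π a) ∧ ∑ a : Profile n, π a = 1

/-- For an aligned history-dependent game with a local and monotone asynchronous
learning rule and initial distribution `π`, a monotone coupling exists between the
path measures `P̂_π` and `P_π` on paths of any length `T ≥ 1`. -/
theorem path_monotone_coupling (n : ℕ) (hn : 1 ≤ n) (Pvec : Fin n → Rule n)
    (hP : ∀ i, IsIndividual i (Pvec i) ∧ IsLocalRule i (Pvec i) ∧ IsMonotoneRule i (Pvec i))
    (Uh : Hist n → UtilProfile n) (Uhat : UtilProfile n) (hA : Aligned Uh Uhat)
    (π : Profile n → ℝ) (hπ : IsProb π) (T : ℕ) :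
    ∃ p : (Fin (T + 1) → Profile n) → (Fin (T + 1) → Profile n) → ℝ,
      IsMonotoneCoupling (pathStatic (asyncRule Pvec) Uhat π T)
        (pathHist (asyncRule Pvec) Uh π T) p := by
  classical
  refine ⟨pathC Pvec Uh Uhat π T, ?_, ?_, ?_, ?_, ?_⟩
  · exact fun α β => pathC_nonneg Pvec hP Uh Uhat hA π hπ.1 T α β
  · rw [Finset.sum_congr rfl
      (fun α _ => pathC_sum_right Pvec (fun i => (hP i).1) Uh Uhat π T α)]
    exact sum_pathStatic hn Pvec (fun i => (hP i).1) Uhat π hπ.2 T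
  · intro α β hab
    exact pathC_zero Pvec Uh Uhat π T α β (fun hc => hab hc)
  · intro β
    rw [Finset.sum_subset (Finset.filter_subset _ Finset.univ)]
    · exact pathC_sum_left Pvec (fun i => (hP i).1) Uh Uhat π T β
    · intro α _ hα
      simp only [Finset.mem_filter, Finset.mem_univ, true_and] at hα
      exact pathC_zero Pvec Uh Uhat π T α β (fun hc => hα hc)
  · intro α
    rw [Finset.sum_subset (Finset.filter_subset _ Finset.univ)]
    · exact pathC_sum_right Pvec (fun i => (hP i).1) Uh Uhat π T α
    · intro β _ hβ
      simp only [Finset.mem_filter, Finset.mem_univ, true_and] at hβ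
      exact pathC_zero Pvec Uh Uhat π T α β (fun hc => hβ hc)
end

section
/- Let g be an aligned history-dependent game with reference static game ĝ, let P be a local and monotone asynchronous learning rule, let π be a probability distribution on A, let T ≥ 1, and let Z : A_T → ℤ≥0 be increasing with respect to the componentwise partial order on A_T. Then the expectation of Z under the path measure P_π of the history-dependent game is at least its expectation under the path measure P̂_π of the static game: E_{P_π}(Z) ≥ E_{P̂_π}(Z). -/
open scoped Classical
open Finset

/-! ### Auxiliary lemmas -/

lemma sum_two {β : Type*} [Fintype β] [DecidableEq β] {u v : β} (huv : u ≠ v) (x y : ℝ)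
    (f : β → ℝ) (hf : ∀ w, f w = if w = u then x else if w = v then y else 0) :
    ∑ w, f w = x + y := by
  have h : ∀ w ∈ Finset.univ, f w = (if w = u then x else 0) + (if w = v then y else 0) := by
    intro w _
    rw [hf w]
    by_cases h1 : w = u
    · subst h1; simp [huv]
    · simp [h1]
  rw [Finset.sum_congr rfl h, Finset.sum_add_distrib]
  simp

lemma update_self_ne {n : ℕ} (i : Fin n) (c : Profile n) :
    Function.update c i true ≠ Function.update c i false := by
  intro h
  have := congrFun h i
  simp at this

lemma not_update_exists {n : ℕ} (i : Fin n) (c w : Profile n)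
    (h : ¬ w = Function.update c i (w i)) : ∃ j, j ≠ i ∧ c j ≠ w j := by
  by_contra hc
  push_neg at hc
  apply h
  funext j
  by_cases hj : j = i
  · subst hj; simp
  · rw [Function.update_of_ne hj]
    exact (hc j hj).symm

lemma rule_zero {n : ℕ} {i : Fin n} {P : Rule n} (hI : IsIndividual i P)
    (c w : Profile n) (U : UtilProfile n) (h : ¬ w = Function.update c i (w i)) :
    P c w U = 0 :=
  hI.2.2 c w U (not_update_exists i c w h)

lemma rule_pair_sum {n : ℕ} {i : Fin n} {P : Rule n} (hI : IsIndividual i P)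
    (c : Profile n) (U : UtilProfile n) :
    P c (Function.update c i true) U + P c (Function.update c i false) U = 1 := by
  have hf : ∀ w, P c w U = if w = Function.update c i true then P c (Function.update c i true) U
      else if w = Function.update c i false then P c (Function.update c i false) U else 0 := by
    intro w
    by_cases h1 : w = Function.update c i true
    · rw [if_pos h1, h1]
    · by_cases h2 : w = Function.update c i false
      · rw [if_neg h1, if_pos h2, h2]
      · rw [if_neg h1, if_neg h2]
        apply rule_zero hI c w U
        intro hw
        cases h3 : w i
        · rw [h3] at hw; exact h2 hw
        · rw [h3] at hw; exact h1 hw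
  rw [← sum_two (update_self_ne i c) _ _ _ hf]
  exact hI.1 c U

/-! ### The key one-step probability comparison -/

def Upair {n : ℕ} (i : Fin n) (u0 u1 : ℝ) : UtilProfile n :=
  fun _ x => if x i then u1 else u0

lemma bump_eval {n : ℕ} (i : Fin n) (U : UtilProfile n) (b : Bool) (l : ℝ) (x : Profile n) :
    bump i U b l i x = if x i = b then U i x + l else U i x := by
  simp [bump]

lemma step_prob_le {n : ℕ} {i : Fin n} {P : Rule n} (hI : IsIndividual i P)
    (hL : IsLocalRule i P) (hM : IsMonotoneRule i P) (A B : Profile n)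
    (U V : UtilProfile n)
    (h0 : U i (Function.update A i false) ≤ V i (Function.update B i false))
    (h1 : V i (Function.update B i true) ≤ U i (Function.update A i true)) :
    P B (Function.update B i true) V ≤ P A (Function.update A i true) U := by
  obtain ⟨Pbar, hPb⟩ := hL
  set c : Profile n := fun _ => false with hc
  have hreal : ∀ (b : Bool) (u0 u1 : ℝ),
      P c (Function.update c i b) (Upair i u0 u1) = Pbar b (u0, u1) := by
    intro b u0 u1
    rw [hPb]
    congr 1
    simp [Upair]
  have hsum : ∀ u0 u1 : ℝ, Pbar true (u0, u1) + Pbar false (u0, u1) = 1 := by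
    intro u0 u1
    rw [← hreal true u0 u1, ← hreal false u0 u1]
    exact rule_pair_sum hI c (Upair i u0 u1)
  have hmt : ∀ (u0 u1 l : ℝ), 0 ≤ l → Pbar true (u0, u1) ≤ Pbar true (u0, u1 + l) := by
    intro u0 u1 l hl
    have h := hM (Upair i u0 u1) true l hl c
    rw [hreal true u0 u1] at h
    rw [hPb] at h
    have e0 : bump i (Upair i u0 u1) true l i (Function.update c i false) = u0 := by
      rw [bump_eval]; simp [Upair]
    have e1 : bump i (Upair i u0 u1) true l i (Function.update c i true) = u1 + l := by
      rw [bump_eval]; simp [Upair]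
    rwa [e0, e1] at h
  have hmf : ∀ (u0 u1 l : ℝ), 0 ≤ l → Pbar false (u0, u1) ≤ Pbar false (u0 + l, u1) := by
    intro u0 u1 l hl
    have h := hM (Upair i u0 u1) false l hl c
    rw [hreal false u0 u1] at h
    rw [hPb] at h
    have e0 : bump i (Upair i u0 u1) false l i (Function.update c i false) = u0 + l := by
      rw [bump_eval]; simp [Upair]
    have e1 : bump i (Upair i u0 u1) false l i (Function.update c i true) = u1 := by
      rw [bump_eval]; simp [Upair]
    rwa [e0, e1] at h
  rw [hPb A, hPb B]
  set u0 := U i (Function.update A i false)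
  set u1 := U i (Function.update A i true)
  set v0 := V i (Function.update B i false)
  set v1 := V i (Function.update B i true)
  have s1 : Pbar true (v0, v1) ≤ Pbar true (v0, u1) := by
    have := hmt v0 v1 (u1 - v1) (by linarith)
    rwa [show v1 + (u1 - v1) = u1 by ring] at this
  have s2 : Pbar true (v0, u1) ≤ Pbar true (u0, u1) := by
    have hff := hmf u0 u1 (v0 - u0) (by linarith)
    rw [show u0 + (v0 - u0) = v0 by ring] at hff
    have := hsum v0 u1
    have := hsum u0 u1
    linarith
  linarith

/-! ### Histories and the value function `W` -/

def consHist {n : ℕ} (a : Profile n) (h : Hist n) : Hist n :=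
  ⟨h.1 + 1, Fin.cons a h.2⟩

lemma lastProf_cons {n : ℕ} (a : Profile n) (h : Hist n) :
    lastProf (consHist a h) = lastProf h := by
  show (Fin.cons a h.2 : Fin (h.1+2) → Profile n) (Fin.last (h.1+1)) = h.2 (Fin.last h.1)
  rw [← Fin.succ_last, Fin.cons_succ]

lemma aligned_cons {n : ℕ} {Uh : Hist n → UtilProfile n} {Uhat : UtilProfile n}
    (hA : Aligned Uh Uhat) (a : Profile n) :
    Aligned (fun h => Uh (consHist a h)) Uhat := by
  intro h c i hle
  have hside : ∀ j, j ≠ i → c j ≤ lastProf (consHist a h) j := by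
    intro j hj; rw [lastProf_cons]; exact hle j hj
  have h2 := hA (consHist a h) c i hside
  rwa [lastProf_cons] at h2

lemma prefix_cons_zero {n T : ℕ} (c : Profile n) (γ : Fin (T + 1) → Profile n) :
    prefixHist (Fin.cons c γ : Fin (T + 2) → Profile n) (0 : Fin (T + 1))
      = ⟨0, fun _ => c⟩ := by
  unfold prefixHist
  congr 1
  funext s
  have hs : (Fin.castLE (Nat.succ_le_succ (0 : Fin (T+1)).isLt.le) s : Fin (T+2)) = 0 := by
    apply Fin.ext
    have hs0 : s.val = 0 := by
      have := s.isLt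
      simp only [Fin.val_zero, zero_add] at this
      omega
    show s.val = (0 : Fin (T+2)).val
    rw [hs0, Fin.val_zero]
  rw [hs, Fin.cons_zero]

lemma prefix_cons_succ {n T : ℕ} (c : Profile n) (γ : Fin (T + 1) → Profile n) (s : Fin T) :
    prefixHist (Fin.cons c γ : Fin (T + 2) → Profile n) s.succ
      = consHist c (prefixHist γ s) := by
  unfold prefixHist consHist
  congr 1
  funext r
  induction r using Fin.cases with
  | zero =>
    have h0 : (Fin.castLE (Nat.succ_le_succ (s.succ : Fin (T+1)).isLt.le) 0 : Fin (T+2)) = 0 := by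
      apply Fin.ext; simp
    rw [h0, Fin.cons_zero, Fin.cons_zero]
  | succ r =>
    have hr : (Fin.castLE (Nat.succ_le_succ (s.succ : Fin (T+1)).isLt.le) r.succ : Fin (T+2))
        = (Fin.castLE (Nat.succ_le_succ s.isLt.le) r).succ := by
      apply Fin.ext; simp
    rw [hr, Fin.cons_succ, Fin.cons_succ]

lemma prod_cons {n T : ℕ} (P : Rule n) (Uh : Hist n → UtilProfile n)
    (c : Profile n) (γ : Fin (T + 1) → Profile n) :
    (∏ t : Fin (T + 1), P ((Fin.cons c γ : Fin (T+2) → Profile n) t.castSucc)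
        ((Fin.cons c γ : Fin (T+2) → Profile n) t.succ)
        (Uh (prefixHist (Fin.cons c γ) t)))
      = P c (γ 0) (Uh ⟨0, fun _ => c⟩)
        * ∏ s : Fin T, P (γ s.castSucc) (γ s.succ) (Uh (consHist c (prefixHist γ s))) := by
  rw [Fin.prod_univ_succ]
  have e1 : (Fin.cons c γ : Fin (T+2) → Profile n) ((0 : Fin (T+1)).castSucc) = c := by
    have h : ((0 : Fin (T+1)).castSucc : Fin (T+2)) = 0 := by apply Fin.ext; simp
    rw [h, Fin.cons_zero]
  have e2 : (Fin.cons c γ : Fin (T+2) → Profile n) ((0 : Fin (T+1)).succ) = γ 0 := by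
    rw [Fin.cons_succ]
  rw [e1, e2, prefix_cons_zero]
  congr 1
  apply Finset.prod_congr rfl
  intro s _
  have e3 : (Fin.cons c γ : Fin (T+2) → Profile n) (s.succ.castSucc) = γ s.castSucc := by
    rw [← Fin.succ_castSucc, Fin.cons_succ]
  have e4 : (Fin.cons c γ : Fin (T+2) → Profile n) (s.succ.succ) = γ s.succ := by
    rw [Fin.cons_succ]
  rw [e3, e4, prefix_cons_succ]

noncomputable def W {n : ℕ} (P : Rule n) (Uh : Hist n → UtilProfile n) (T : ℕ)
    (Z : (Fin (T + 1) → Profile n) → ℝ) (a : Profile n) : ℝ :=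
  ∑ α : Fin (T + 1) → Profile n, pathHist P Uh (fun x => if x = a then 1 else 0) T α * Z α

lemma W_zero {n : ℕ} (P : Rule n) (Uh : Hist n → UtilProfile n)
    (Z : (Fin 1 → Profile n) → ℝ) (a : Profile n) :
    W P Uh 0 Z a = Z (fun _ => a) := by
  unfold W pathHist
  have h : ∀ α : Fin 1 → Profile n, (α 0 = a) ↔ (α = fun _ => a) := by
    intro α
    constructor
    · intro h; funext s; rw [Fin.fin_one_eq_zero s]; exact h
    · intro h; rw [h]
  calc ∑ α : Fin 1 → Profile n, (if α 0 = a then (1:ℝ) else 0) * (∏ t : Fin 0,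
        P (α t.castSucc) (α t.succ) (Uh (prefixHist α t))) * Z α
      = ∑ α : Fin 1 → Profile n, (if α = (fun _ => a) then Z α else 0) := by
        apply Finset.sum_congr rfl
        intro α _
        rw [show (if α 0 = a then (1:ℝ) else 0) = (if α = (fun _ => a) then 1 else 0) by
          simp [h α]]
        simp only [Finset.univ_eq_empty, Finset.prod_empty, mul_one]
        split_ifs <;> ring
    _ = Z (fun _ => a) := by
        rw [Finset.sum_ite_eq' Finset.univ (fun _ => a) Z]
        simp

lemma regroup {n T : ℕ} (F : Profile n → ℝ) (G : (Fin (T + 1) → Profile n) → ℝ) :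
    ∑ γ : Fin (T + 1) → Profile n, F (γ 0) * G γ
      = ∑ a' : Profile n, F a' * ∑ γ : Fin (T + 1) → Profile n,
          (if γ 0 = a' then (1:ℝ) else 0) * G γ := by
  have hms : ∀ a' : Profile n, F a' * (∑ γ : Fin (T + 1) → Profile n,
      (if γ 0 = a' then (1:ℝ) else 0) * G γ)
      = ∑ γ : Fin (T + 1) → Profile n, F a' * ((if γ 0 = a' then (1:ℝ) else 0) * G γ) :=
    fun a' => Finset.mul_sum _ _ _
  rw [Finset.sum_congr rfl fun a' _ => hms a', Finset.sum_comm]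
  apply Finset.sum_congr rfl
  intro γ _
  have : ∀ a' : Profile n, F a' * ((if γ 0 = a' then (1:ℝ) else 0) * G γ)
      = if γ 0 = a' then F a' * G γ else 0 := by
    intro a'; split_ifs <;> ring
  rw [Finset.sum_congr rfl fun a' _ => this a']
  rw [Finset.sum_ite_eq Finset.univ (γ 0) (fun a' => F a' * G γ)]
  simp

lemma W_succ {n : ℕ} (P : Rule n) (Uh : Hist n → UtilProfile n) (T : ℕ)
    (Z : (Fin (T + 2) → Profile n) → ℝ) (a : Profile n) :
    W P Uh (T + 1) Z a
      = ∑ a' : Profile n, P a a' (Uh ⟨0, fun _ => a⟩)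
          * W P (fun h => Uh (consHist a h)) T (fun γ => Z (Fin.cons a γ)) a' := by
  unfold W pathHist
  rw [← (Fin.consEquiv (fun _ : Fin (T+2) => Profile n)).sum_comp]
  rw [Fintype.sum_prod_type]
  have hsymm : ∀ (c : Profile n) (γ : Fin (T+1) → Profile n),
      (Fin.consEquiv (fun _ : Fin (T+2) => Profile n)) (c, γ) = Fin.cons c γ := fun _ _ => rfl
  calc (∑ c : Profile n, ∑ γ : Fin (T+1) → Profile n,
        (if ((Fin.consEquiv (fun _ : Fin (T+2) => Profile n)) (c, γ)) 0 = a then (1:ℝ) else 0) *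
          (∏ t : Fin (T+1), P (((Fin.consEquiv (fun _ : Fin (T+2) => Profile n)) (c, γ)) t.castSucc)
            (((Fin.consEquiv (fun _ : Fin (T+2) => Profile n)) (c, γ)) t.succ)
            (Uh (prefixHist ((Fin.consEquiv (fun _ : Fin (T+2) => Profile n)) (c, γ)) t))) *
          Z ((Fin.consEquiv (fun _ : Fin (T+2) => Profile n)) (c, γ)))
      = ∑ c : Profile n, ∑ γ : Fin (T+1) → Profile n,
        (if c = a then (1:ℝ) else 0) *
          ((P c (γ 0) (Uh ⟨0, fun _ => c⟩) *
            ∏ s : Fin T, P (γ s.castSucc) (γ s.succ) (Uh (consHist c (prefixHist γ s)))) *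
          Z (Fin.cons c γ)) := by
        apply Finset.sum_congr rfl; intro c _
        apply Finset.sum_congr rfl; intro γ _
        rw [hsymm c γ, Fin.cons_zero, prod_cons, mul_assoc]
    _ = ∑ γ : Fin (T+1) → Profile n,
          P a (γ 0) (Uh ⟨0, fun _ => a⟩) *
            ((∏ s : Fin T, P (γ s.castSucc) (γ s.succ) (Uh (consHist a (prefixHist γ s)))) *
          Z (Fin.cons a γ)) := by
        rw [Finset.sum_comm]
        apply Finset.sum_congr rfl; intro γ _
        have : ∀ c : Profile n, (if c = a then (1:ℝ) else 0) *
            ((P c (γ 0) (Uh ⟨0, fun _ => c⟩) *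
              ∏ s : Fin T, P (γ s.castSucc) (γ s.succ) (Uh (consHist c (prefixHist γ s)))) *
            Z (Fin.cons c γ))
            = if c = a then P c (γ 0) (Uh ⟨0, fun _ => c⟩) *
              ((∏ s : Fin T, P (γ s.castSucc) (γ s.succ) (Uh (consHist c (prefixHist γ s)))) *
              Z (Fin.cons c γ)) else 0 := by
          intro c; split_ifs <;> ring
        rw [Finset.sum_congr rfl fun c _ => this c]
        rw [Finset.sum_ite_eq' Finset.univ a]
        simp
    _ = _ := by
        rw [regroup (fun a' => P a a' (Uh ⟨0, fun _ => a⟩))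
          (fun γ => (∏ s : Fin T, P (γ s.castSucc) (γ s.succ) (Uh (consHist a (prefixHist γ s)))) *
            Z (Fin.cons a γ))]
        apply Finset.sum_congr rfl; intro a' _
        congr 1
        apply Finset.sum_congr rfl; intro γ _
        ring

/-! ### The coupling -/

def kap {n : ℕ} (i : Fin n) (a b : Profile n) (p q : ℝ) (a' b' : Profile n) : ℝ :=
  if a' = Function.update a i (a' i) ∧ b' = Function.update b i (b' i) then
    (if a' i then (if b' i then q else p - q) else (if b' i then 0 else 1 - p))
  else 0

lemma kap_nonneg {n : ℕ} (i : Fin n) (a b : Profile n) {p q : ℝ}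
    (h0q : 0 ≤ q) (hqp : q ≤ p) (hp1 : p ≤ 1) (a' b' : Profile n) :
    0 ≤ kap i a b p q a' b' := by
  unfold kap
  split_ifs <;> linarith

lemma kap_support {n : ℕ} (i : Fin n) {a b : Profile n} (hba : b ≤ a) {p q : ℝ}
    {a' b' : Profile n} (h : kap i a b p q a' b' ≠ 0) : b' ≤ a' := by
  unfold kap at h
  by_cases hcond : a' = Function.update a i (a' i) ∧ b' = Function.update b i (b' i)
  · obtain ⟨ha', hb'⟩ := hcond
    intro j
    by_cases hj : j = i
    · subst hj
      cases haa : a' j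
      · cases hbb : b' j
        · simp [hbb, haa]
        · exfalso
          apply h
          rw [if_pos ⟨ha', hb'⟩, haa, hbb]
          simp
      · simp [haa]
    · have h1 := congrFun ha' j
      have h2 := congrFun hb' j
      rw [Function.update_of_ne hj] at h1 h2
      rw [h1, h2]
      exact hba j
  · exact absurd (if_neg hcond) h

lemma kap_sum_b {n : ℕ} (i : Fin n) (a b : Profile n) (p q : ℝ) (a' : Profile n) :
    ∑ b' : Profile n, kap i a b p q a' b'
      = if a' = Function.update a i (a' i) then (if a' i then p else 1 - p) else 0 := by
  by_cases h : a' = Function.update a i (a' i)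
  · rw [if_pos h]
    have hne : Function.update b i false ≠ Function.update b i true :=
      (update_self_ne i b).symm
    rw [sum_two (update_self_ne i b)
      (if a' i then q else 0) (if a' i then p - q else 1 - p) _ ?_]
    · cases haa : a' i <;> simp [haa] <;> ring
    · intro w
      unfold kap
      by_cases h1 : w = Function.update b i true
      · subst h1
        have hui : (Function.update b i true) i = true := Function.update_self i true b
        rw [hui, if_pos ⟨h, rfl⟩, if_pos rfl]
        simp
      · by_cases h2 : w = Function.update b i false
        · subst h2
          have hui : (Function.update b i false) i = false := Function.update_self i false b
          rw [hui, if_pos ⟨h, rfl⟩, if_neg hne, if_pos rfl]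
          simp
        · have hw : ¬ (a' = Function.update a i (a' i) ∧ w = Function.update b i (w i)) := by
            intro hc
            cases h3 : w i
            · rw [h3] at hc; exact h2 hc.2
            · rw [h3] at hc; exact h1 hc.2
          rw [if_neg hw, if_neg h1, if_neg h2]
  · rw [if_neg h]
    apply Finset.sum_eq_zero
    intro b' _
    unfold kap
    rw [if_neg (fun hc => h hc.1)]

lemma kap_sum_a {n : ℕ} (i : Fin n) (a b : Profile n) (p q : ℝ) (b' : Profile n) :
    ∑ a' : Profile n, kap i a b p q a' b'
      = if b' = Function.update b i (b' i) then (if b' i then q else 1 - q) else 0 := by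
  by_cases h : b' = Function.update b i (b' i)
  · rw [if_pos h]
    have hne : Function.update a i false ≠ Function.update a i true :=
      (update_self_ne i a).symm
    rw [sum_two (update_self_ne i a)
      (if b' i then q else p - q) (if b' i then 0 else 1 - p) _ ?_]
    · cases hbb : b' i <;> simp [hbb] <;> ring
    · intro w
      unfold kap
      by_cases h1 : w = Function.update a i true
      · subst h1
        have hui : (Function.update a i true) i = true := Function.update_self i true a
        rw [hui, if_pos ⟨rfl, h⟩, if_pos rfl]
        simp
      · by_cases h2 : w = Function.update a i false
        · subst h2
          have hui : (Function.update a i false) i = false := Function.update_self i false a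
          rw [hui, if_pos ⟨rfl, h⟩, if_neg hne, if_pos rfl]
          simp
        · have hw : ¬ (w = Function.update a i (w i) ∧ b' = Function.update b i (b' i)) := by
            intro hc
            cases h3 : w i
            · rw [h3] at hc; exact h2 hc.1
            · rw [h3] at hc; exact h1 hc.1
          rw [if_neg hw, if_neg h1, if_neg h2]
  · rw [if_neg h]
    apply Finset.sum_eq_zero
    intro a' _
    unfold kap
    rw [if_neg (fun hc => h hc.2)]

lemma async_sum_eq {n : ℕ} (Pvec : Fin n → Rule n) (c : Profile n) (V : UtilProfile n)
    (F : Profile n → ℝ) :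
    ∑ x : Profile n, asyncRule Pvec c x V * F x
      = (1 / (n:ℝ)) * ∑ i : Fin n, ∑ x : Profile n, Pvec i c x V * F x := by
  unfold asyncRule
  calc ∑ x : Profile n, ((1 / (n:ℝ)) * ∑ i : Fin n, Pvec i c x V) * F x
      = ∑ x : Profile n, (1 / (n:ℝ)) * ∑ i : Fin n, Pvec i c x V * F x := by
        apply Finset.sum_congr rfl; intro x _
        rw [mul_assoc, Finset.sum_mul]
    _ = (1 / (n:ℝ)) * ∑ x : Profile n, ∑ i : Fin n, Pvec i c x V * F x := by
        rw [← Finset.mul_sum]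
    _ = _ := by rw [Finset.sum_comm]

lemma coupling {n : ℕ} (Pvec : Fin n → Rule n)
    (hP : ∀ i, IsIndividual i (Pvec i) ∧ IsLocalRule i (Pvec i) ∧ IsMonotoneRule i (Pvec i))
    (Uhat U0 : UtilProfile n) (a b : Profile n) (hba : b ≤ a)
    (hpq : ∀ i : Fin n,
      Pvec i b (Function.update b i true) Uhat ≤ Pvec i a (Function.update a i true) U0)
    (Ws Wh : Profile n → ℝ) (hWW : ∀ a' b', b' ≤ a' → Ws b' ≤ Wh a') :
    ∑ b' : Profile n, asyncRule Pvec b b' Uhat * Ws b'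
      ≤ ∑ a' : Profile n, asyncRule Pvec a a' U0 * Wh a' := by
  set p : Fin n → ℝ := fun i => Pvec i a (Function.update a i true) U0 with hp
  set q : Fin n → ℝ := fun i => Pvec i b (Function.update b i true) Uhat with hq
  have hq0 : ∀ i, 0 ≤ q i := fun i => ((hP i).1.2.1 b (Function.update b i true) Uhat).1
  have hp1 : ∀ i, p i ≤ 1 := fun i => ((hP i).1.2.1 a (Function.update a i true) U0).2
  have hqp : ∀ i, q i ≤ p i := hpq
  have hm1 : ∀ (i : Fin n) (a' : Profile n),
      ∑ b' : Profile n, kap i a b (p i) (q i) a' b' = Pvec i a a' U0 := by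
    intro i a'
    rw [kap_sum_b]
    by_cases h : a' = Function.update a i (a' i)
    · rw [if_pos h]
      cases ha : a' i
      · rw [ha] at h
        have hsum := rule_pair_sum (hP i).1 a U0
        have hpi : p i = Pvec i a (Function.update a i true) U0 := rfl
        rw [h]
        rw [if_neg Bool.false_ne_true]
        linarith
      · rw [ha] at h
        have hpi : p i = Pvec i a (Function.update a i true) U0 := rfl
        rw [h]
        rw [if_pos rfl]
    · rw [if_neg h, rule_zero (hP i).1 a a' U0 h]
  have hm2 : ∀ (i : Fin n) (b' : Profile n),
      ∑ a' : Profile n, kap i a b (p i) (q i) a' b' = Pvec i b b' Uhat := by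
    intro i b'
    rw [kap_sum_a]
    by_cases h : b' = Function.update b i (b' i)
    · rw [if_pos h]
      cases hb : b' i
      · rw [hb] at h
        have hsum := rule_pair_sum (hP i).1 b Uhat
        have hqi : q i = Pvec i b (Function.update b i true) Uhat := rfl
        rw [h]
        rw [if_neg Bool.false_ne_true]
        linarith
      · rw [hb] at h
        have hqi : q i = Pvec i b (Function.update b i true) Uhat := rfl
        rw [h]
        rw [if_pos rfl]
    · rw [if_neg h, rule_zero (hP i).1 b b' Uhat h]
  have key : ∀ i : Fin n,
      ∑ b' : Profile n, Pvec i b b' Uhat * Ws b'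
        ≤ ∑ a' : Profile n, Pvec i a a' U0 * Wh a' := by
    intro i
    calc ∑ b' : Profile n, Pvec i b b' Uhat * Ws b'
        = ∑ b' : Profile n, ∑ a' : Profile n, kap i a b (p i) (q i) a' b' * Ws b' := by
          apply Finset.sum_congr rfl; intro b' _
          rw [← hm2 i b', Finset.sum_mul]
      _ = ∑ a' : Profile n, ∑ b' : Profile n, kap i a b (p i) (q i) a' b' * Ws b' :=
          Finset.sum_comm
      _ ≤ ∑ a' : Profile n, ∑ b' : Profile n, kap i a b (p i) (q i) a' b' * Wh a' := by
          apply Finset.sum_le_sum; intro a' _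
          apply Finset.sum_le_sum; intro b' _
          by_cases hk : kap i a b (p i) (q i) a' b' = 0
          · rw [hk]; simp
          · exact mul_le_mul_of_nonneg_left (hWW a' b' (kap_support i hba hk))
              (kap_nonneg i a b (hq0 i) (hqp i) (hp1 i) a' b')
      _ = ∑ a' : Profile n, (∑ b' : Profile n, kap i a b (p i) (q i) a' b') * Wh a' := by
          apply Finset.sum_congr rfl; intro a' _
          rw [Finset.sum_mul]
      _ = ∑ a' : Profile n, Pvec i a a' U0 * Wh a' := by
          apply Finset.sum_congr rfl; intro a' _
          rw [hm1 i a']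
  rw [async_sum_eq, async_sum_eq]
  apply mul_le_mul_of_nonneg_left _ (by positivity)
  exact Finset.sum_le_sum fun i _ => key i

lemma cons_le_cons {n T : ℕ} {a b : Profile n} (hba : b ≤ a)
    {γ δ : Fin (T + 1) → Profile n} (hgd : γ ≤ δ) :
    (Fin.cons b γ : Fin (T + 2) → Profile n) ≤ Fin.cons a δ := by
  intro t
  induction t using Fin.cases with
  | zero => rw [Fin.cons_zero, Fin.cons_zero]; exact hba
  | succ s => rw [Fin.cons_succ, Fin.cons_succ]; exact hgd s

lemma main_compare {n : ℕ} (Pvec : Fin n → Rule n)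
    (hP : ∀ i, IsIndividual i (Pvec i) ∧ IsLocalRule i (Pvec i) ∧ IsMonotoneRule i (Pvec i))
    (Uhat : UtilProfile n) :
    ∀ (T : ℕ) (Uh : Hist n → UtilProfile n), Aligned Uh Uhat →
      ∀ (Zs Zh : (Fin (T + 1) → Profile n) → ℝ),
      (∀ γ δ, γ ≤ δ → Zs γ ≤ Zh δ) →
      ∀ (a b : Profile n), b ≤ a →
      W (asyncRule Pvec) (fun _ => Uhat) T Zs b ≤ W (asyncRule Pvec) Uh T Zh a := by
  intro T
  induction T with
  | zero =>
    intro Uh _ Zs Zh hZZ a b hba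
    rw [W_zero, W_zero]
    exact hZZ _ _ (fun _ => hba)
  | succ T ih =>
    intro Uh hA Zs Zh hZZ a b hba
    rw [W_succ, W_succ]
    have hpq : ∀ i : Fin n,
        Pvec i b (Function.update b i true) Uhat
          ≤ Pvec i a (Function.update a i true) (Uh ⟨0, fun _ => a⟩) := by
      intro i
      obtain ⟨hI, hL, hM⟩ := hP i
      have hal := hA ⟨0, fun _ => a⟩ b i (fun j _ => hba j)
      exact step_prob_le hI hL hM a b (Uh ⟨0, fun _ => a⟩) Uhat hal.2 hal.1
    have hWW : ∀ a' b', b' ≤ a' →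
        W (asyncRule Pvec) (fun _ => Uhat) T (fun γ => Zs (Fin.cons b γ)) b'
          ≤ W (asyncRule Pvec) (fun h => Uh (consHist a h)) T (fun γ => Zh (Fin.cons a γ)) a' := by
      intro a' b' h
      exact ih (fun h => Uh (consHist a h)) (aligned_cons hA a) _ _
        (fun γ δ hgd => hZZ _ _ (cons_le_cons hba hgd)) a' b' h
    exact coupling Pvec hP Uhat (Uh ⟨0, fun _ => a⟩) a b hba hpq _ _ hWW

lemma sum_path_eq_W {n : ℕ} (P : Rule n) (Uh : Hist n → UtilProfile n)
    (π : Profile n → ℝ) (T : ℕ) (Zr : (Fin (T + 1) → Profile n) → ℝ) :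
    ∑ α : Fin (T + 1) → Profile n, pathHist P Uh π T α * Zr α
      = ∑ a : Profile n, π a * W P Uh T Zr a := by
  unfold W pathHist
  symm
  calc ∑ a : Profile n, π a * ∑ α : Fin (T + 1) → Profile n,
        ((if α 0 = a then (1:ℝ) else 0) *
          ∏ t : Fin T, P (α t.castSucc) (α t.succ) (Uh (prefixHist α t))) * Zr α
      = ∑ a : Profile n, ∑ α : Fin (T + 1) → Profile n,
        π a * (((if α 0 = a then (1:ℝ) else 0) *
          ∏ t : Fin T, P (α t.castSucc) (α t.succ) (Uh (prefixHist α t))) * Zr α) := by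
        apply Finset.sum_congr rfl; intro a _
        exact Finset.mul_sum _ _ _
    _ = ∑ α : Fin (T + 1) → Profile n, ∑ a : Profile n,
        π a * (((if α 0 = a then (1:ℝ) else 0) *
          ∏ t : Fin T, P (α t.castSucc) (α t.succ) (Uh (prefixHist α t))) * Zr α) :=
        Finset.sum_comm
    _ = ∑ α : Fin (T + 1) → Profile n,
        (π (α 0) * ∏ t : Fin T, P (α t.castSucc) (α t.succ) (Uh (prefixHist α t))) * Zr α := by
        apply Finset.sum_congr rfl; intro α _
        have : ∀ a : Profile n, π a * (((if α 0 = a then (1:ℝ) else 0) *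
            ∏ t : Fin T, P (α t.castSucc) (α t.succ) (Uh (prefixHist α t))) * Zr α)
            = if α 0 = a then (π a * ∏ t : Fin T,
              P (α t.castSucc) (α t.succ) (Uh (prefixHist α t))) * Zr α else 0 := by
          intro a; split_ifs <;> ring
        rw [Finset.sum_congr rfl fun a _ => this a]
        rw [Finset.sum_ite_eq Finset.univ (α 0)]
        simp

/-- For an aligned history-dependent game with a local and monotone asynchronous
learning rule, every increasing `Z : A_T → ℤ≥0` has at least as large an expectation
under the history-dependent path measure as under the static one. -/
theorem expectation_of_increasing (n : ℕ) (hn : 1 ≤ n) (Pvec : Fin n → Rule n)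
    (hP : ∀ i, IsIndividual i (Pvec i) ∧ IsLocalRule i (Pvec i) ∧ IsMonotoneRule i (Pvec i))
    (Uh : Hist n → UtilProfile n) (Uhat : UtilProfile n) (hA : Aligned Uh Uhat)
    (π : Profile n → ℝ) (hπ : IsProb π) (T : ℕ)
    (Z : (Fin (T + 1) → Profile n) → ℕ) (hZ : Monotone Z) :
    ∑ α : Fin (T + 1) → Profile n, pathStatic (asyncRule Pvec) Uhat π T α * (Z α : ℝ)
      ≤ ∑ α : Fin (T + 1) → Profile n, pathHist (asyncRule Pvec) Uh π T α * (Z α : ℝ) := by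
  have hps : ∀ α : Fin (T + 1) → Profile n,
      pathStatic (asyncRule Pvec) Uhat π T α
        = pathHist (asyncRule Pvec) (fun _ => Uhat) π T α := fun _ => rfl
  have hcast : ∀ γ δ : Fin (T + 1) → Profile n, γ ≤ δ → ((Z γ : ℝ)) ≤ (Z δ : ℝ) :=
    fun γ δ h => Nat.cast_le.mpr (hZ h)
  calc ∑ α : Fin (T + 1) → Profile n, pathStatic (asyncRule Pvec) Uhat π T α * (Z α : ℝ)
      = ∑ α : Fin (T + 1) → Profile n,
          pathHist (asyncRule Pvec) (fun _ => Uhat) π T α * (Z α : ℝ) := by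
        apply Finset.sum_congr rfl; intro α _; rw [hps α]
    _ = ∑ a : Profile n, π a * W (asyncRule Pvec) (fun _ => Uhat) T (fun α => (Z α : ℝ)) a :=
        sum_path_eq_W _ _ _ _ _
    _ ≤ ∑ a : Profile n, π a * W (asyncRule Pvec) Uh T (fun α => (Z α : ℝ)) a := by
        apply Finset.sum_le_sum
        intro a _
        exact mul_le_mul_of_nonneg_left
          (main_compare Pvec hP Uhat T Uh hA _ _ hcast a a le_rfl) (hπ.1 a)
    _ = ∑ α : Fin (T + 1) → Profile n, pathHist (asyncRule Pvec) Uh π T α * (Z α : ℝ) :=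
        (sum_path_eq_W _ _ _ _ _).symm
end

section
/- Let g be an aligned history-dependent game with reference static game ĝ, let P be a local and monotone asynchronous learning rule, let π be a probability distribution on A, let T ≥ 1, and let I ⊆ A_T be an upper set (α ∈ I and α' ≥ α componentwise imply α' ∈ I). Then P_π(I) ≥ P̂_π(I). -/
open scoped Classical
open Finset

section Try
variable {n : ℕ} (i : Fin n) (P : Rule n)

lemma upd_neq (a : Profile n) : Function.update a i false ≠ Function.update a i true := by
  intro h
  have := congrFun h i
  simp at this

lemma sum_two_s7 (hInd : IsIndividual i P) (a : Profile n) (U : UtilProfile n) (f : Profile n → ℝ) :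
    ∑ c : Profile n, P a c U * f c
      = P a (Function.update a i false) U * f (Function.update a i false)
        + P a (Function.update a i true) U * f (Function.update a i true) := by
  have hp := Finset.sum_pair (f := fun c => P a c U * f c) (upd_neq i a)
  rw [← hp]
  refine (Finset.sum_subset (Finset.subset_univ _) ?_).symm
  intro c _ hc
  have hzero : P a c U = 0 := by
    apply hInd.2.2
    by_contra hcon
    push_neg at hcon
    have hc2 : c = Function.update a i (c i) := by
      funext j
      by_cases hj : j = i
      · subst hj; simp
      · rw [Function.update_of_ne hj]
        by_contra hne
        exact hne ((hcon j hj).symm)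
    apply hc
    rcases Bool.dichotomy (c i) with h | h <;> rw [h] at hc2 <;> simp [hc2]
  rw [hzero, zero_mul]

lemma sum_one_pair (hInd : IsIndividual i P) (a : Profile n) (U : UtilProfile n) :
    P a (Function.update a i false) U + P a (Function.update a i true) U = 1 := by
  have h := sum_two_s7 i P hInd a U (fun _ => 1)
  simp only [mul_one] at h
  rw [← h, hInd.1]

/-- auxiliary utility profile realizing payoff pair (x,y) for agent i -/
def mkU {n : ℕ} (i : Fin n) (x y : ℝ) : UtilProfile n := fun _ p => if p i = true then y else x

lemma mkU_val0 {n : ℕ} (i : Fin n) (x y : ℝ) (a : Profile n) :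
    mkU i x y i (Function.update a i false) = x := by simp [mkU]

lemma mkU_val1 {n : ℕ} (i : Fin n) (x y : ℝ) (a : Profile n) :
    mkU i x y i (Function.update a i true) = y := by simp [mkU]

lemma key_le {n : ℕ} (i : Fin n) (P : Rule n) (hInd : IsIndividual i P)
    (hLoc : IsLocalRule i P) (hMon : IsMonotoneRule i P)
    (U V : UtilProfile n) (ah a' : Profile n)
    (h1 : U i (Function.update ah i true) ≤ V i (Function.update a' i true))
    (h0 : V i (Function.update a' i false) ≤ U i (Function.update ah i false)) :
    P ah (Function.update ah i true) U ≤ P a' (Function.update a' i true) V := by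
  obtain ⟨Pbar, hloc⟩ := hLoc
  -- evaluate Pbar on mkU
  have hmk : ∀ (b : Bool) (x y : ℝ) (a : Profile n),
      P a (Function.update a i b) (mkU i x y) = Pbar b (x, y) := by
    intro b x y a
    rw [hloc, mkU_val0, mkU_val1]
  have mono_true : ∀ (x y y' : ℝ), y ≤ y' → Pbar true (x, y) ≤ Pbar true (x, y') := by
    intro x y y' hyy
    have h := hMon (mkU i x y) true (y' - y) (by linarith) ah
    rw [hmk] at h
    have hb : P ah (Function.update ah i true) (bump i (mkU i x y) true (y' - y))
        = Pbar true (x, y') := by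
      rw [hloc]
      have e0 : bump i (mkU i x y) true (y' - y) i (Function.update ah i false) = x := by
        simp [bump, mkU]
      have e1 : bump i (mkU i x y) true (y' - y) i (Function.update ah i true) = y' := by
        simp [bump, mkU]
      rw [e0, e1]
    rw [hb] at h
    exact h
  have mono_false : ∀ (x x' y : ℝ), x ≤ x' → Pbar false (x, y) ≤ Pbar false (x', y) := by
    intro x x' y hxx
    have h := hMon (mkU i x y) false (x' - x) (by linarith) ah
    rw [hmk] at h
    have hb : P ah (Function.update ah i false) (bump i (mkU i x y) false (x' - x))
        = Pbar false (x', y) := by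
      rw [hloc]
      have e0 : bump i (mkU i x y) false (x' - x) i (Function.update ah i false) = x' := by
        simp [bump, mkU]
      have e1 : bump i (mkU i x y) false (x' - x) i (Function.update ah i true) = y := by
        simp [bump, mkU]
      rw [e0, e1]
    rw [hb] at h
    exact h
  have sum_one : ∀ (x y : ℝ), Pbar false (x, y) + Pbar true (x, y) = 1 := by
    intro x y
    have := sum_one_pair i P hInd ah (mkU i x y)
    rwa [hmk, hmk] at this
  rw [hloc, hloc]
  set u0 := U i (Function.update ah i false)
  set u1 := U i (Function.update ah i true)
  set v0 := V i (Function.update a' i false)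
  set v1 := V i (Function.update a' i true)
  have s1 : Pbar true (u0, u1) ≤ Pbar true (u0, v1) := mono_true _ _ _ h1
  have s2 : Pbar false (v0, v1) ≤ Pbar false (u0, v1) := mono_false _ _ _ h0
  have e1 := sum_one u0 v1
  have e2 := sum_one v0 v1
  linarith

-- per-agent one-step inequality
lemma agent_step {n : ℕ} (i : Fin n) (P : Rule n)
    (hInd : IsIndividual i P) (hLoc : IsLocalRule i P) (hMon : IsMonotoneRule i P)
    (Uh : Hist n → UtilProfile n) (Uhat : UtilProfile n) (hA : Aligned Uh Uhat)
    (h : Hist n) (ah : Profile n) (hle : ∀ j, ah j ≤ lastProf h j)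
    (fh f : Profile n → ℝ)
    (hcross : ∀ b b' : Bool, b ≤ b' →
      fh (Function.update ah i b) ≤ f (Function.update (lastProf h) i b')) :
    ∑ c : Profile n, P ah c Uhat * fh c ≤ ∑ c : Profile n, P (lastProf h) c (Uh h) * f c := by
  rw [sum_two_s7 i P hInd, sum_two_s7 i P hInd]
  obtain ⟨hu1, hu0⟩ := hA h ah i (fun j _ => hle j)
  have hq : P ah (Function.update ah i true) Uhat
      ≤ P (lastProf h) (Function.update (lastProf h) i true) (Uh h) :=
    key_le i P hInd hLoc hMon Uhat (Uh h) ah (lastProf h) hu1 hu0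
  have hs1 := sum_one_pair i P hInd ah Uhat
  have hs2 := sum_one_pair i P hInd (lastProf h) (Uh h)
  have hb1 := (hInd.2.1 ah (Function.update ah i true) Uhat).1
  have hb2 := (hInd.2.1 (lastProf h) (Function.update (lastProf h) i true) (Uh h)).2
  have c00 := hcross false false le_rfl
  have c01 := hcross false true (by simp)
  have c11 := hcross true true le_rfl
  have e1 : P ah (Function.update ah i false) Uhat
      = 1 - P ah (Function.update ah i true) Uhat := by linarith
  have e2 : P (lastProf h) (Function.update (lastProf h) i false) (Uh h)
      = 1 - P (lastProf h) (Function.update (lastProf h) i true) (Uh h) := by linarith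
  rw [e1, e2]
  nlinarith [mul_nonneg hb1 (sub_nonneg.2 c11),
    mul_nonneg (sub_nonneg.2 hq) (sub_nonneg.2 c01),
    mul_nonneg (sub_nonneg.2 hb2) (sub_nonneg.2 c00)]

-- averaged one-step inequality
lemma async_step {n : ℕ} (Pvec : Fin n → Rule n)
    (hP : ∀ i, IsIndividual i (Pvec i) ∧ IsLocalRule i (Pvec i) ∧ IsMonotoneRule i (Pvec i))
    (Uh : Hist n → UtilProfile n) (Uhat : UtilProfile n) (hA : Aligned Uh Uhat)
    (h : Hist n) (ah : Profile n) (hle : ∀ j, ah j ≤ lastProf h j)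
    (fh f : Profile n → ℝ)
    (hcross : ∀ (i : Fin n) (b b' : Bool), b ≤ b' →
      fh (Function.update ah i b) ≤ f (Function.update (lastProf h) i b')) :
    ∑ c : Profile n, asyncRule Pvec ah c Uhat * fh c
      ≤ ∑ c : Profile n, asyncRule Pvec (lastProf h) c (Uh h) * f c := by
  simp only [asyncRule, mul_assoc]
  rw [← Finset.mul_sum, ← Finset.mul_sum]
  apply mul_le_mul_of_nonneg_left _ (by positivity)
  simp only [Finset.sum_mul]
  rw [Finset.sum_comm, Finset.sum_comm (γ := Profile n)]
  apply Finset.sum_le_sum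
  intro i _
  exact agent_step i (Pvec i) (hP i).1 (hP i).2.1 (hP i).2.2 Uh Uhat hA h ah hle fh f
    (hcross i)

-- nonnegativity of asyncRule
lemma async_nonneg {n : ℕ} (Pvec : Fin n → Rule n)
    (hP : ∀ i, IsIndividual i (Pvec i) ∧ IsLocalRule i (Pvec i) ∧ IsMonotoneRule i (Pvec i))
    (a b : Profile n) (U : UtilProfile n) : 0 ≤ asyncRule Pvec a b U := by
  unfold asyncRule
  apply mul_nonneg (by positivity)
  exact Finset.sum_nonneg fun i _ => ((hP i).1.2.1 a b U).1

lemma prefix_snoc_castSucc {n T : ℕ} (α : Fin (T + 1) → Profile n) (c : Profile n) (t : Fin T) :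
    prefixHist (Fin.snoc α c) t.castSucc = prefixHist α t := by
  unfold prefixHist
  have hfun : (fun s : Fin (t.1 + 1) =>
        (Fin.snoc α c : Fin (T + 2) → Profile n)
          (Fin.castLE (Nat.succ_le_succ t.castSucc.isLt.le) s))
      = (fun s : Fin (t.1 + 1) => α (Fin.castLE (Nat.succ_le_succ t.isLt.le) s)) := by
    funext s
    have he : Fin.castLE (Nat.succ_le_succ t.castSucc.isLt.le) s
        = Fin.castSucc (Fin.castLE (Nat.succ_le_succ t.isLt.le) s) := by
      apply Fin.ext; simp
    rw [he, Fin.snoc_castSucc]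
  exact congrArg (Sigma.mk t.1) hfun

lemma prefix_snoc_last {n T : ℕ} (α : Fin (T + 1) → Profile n) (c : Profile n) :
    prefixHist (Fin.snoc α c) (Fin.last T) = ⟨T, α⟩ := by
  unfold prefixHist
  have hfun : (fun s : Fin (T + 1) =>
        (Fin.snoc α c : Fin (T + 2) → Profile n)
          (Fin.castLE (Nat.succ_le_succ (Fin.last T).isLt.le) s))
      = α := by
    funext s
    have he : Fin.castLE (Nat.succ_le_succ (Fin.last T).isLt.le) s = Fin.castSucc s := by
      apply Fin.ext; simp
    rw [he, Fin.snoc_castSucc]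
  exact congrArg (Sigma.mk T) hfun

lemma snoc_zero' {n T : ℕ} (α : Fin (T + 1) → Profile n) (c : Profile n) :
    (Fin.snoc α c : Fin (T + 2) → Profile n) 0 = α 0 := by
  have : (0 : Fin (T + 2)) = Fin.castSucc (0 : Fin (T + 1)) := rfl
  rw [this, Fin.snoc_castSucc]

lemma pathHist_snoc {n : ℕ} (P : Rule n) (Uh : Hist n → UtilProfile n)
    (π : Profile n → ℝ) (T : ℕ) (α : Fin (T + 1) → Profile n) (c : Profile n) :
    pathHist P Uh π (T + 1) (Fin.snoc α c)
      = pathHist P Uh π T α * P (α (Fin.last T)) c (Uh ⟨T, α⟩) := by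
  unfold pathHist
  rw [Fin.prod_univ_castSucc]
  rw [snoc_zero']
  have hmid : ∀ t : Fin T,
      P ((Fin.snoc α c : Fin (T + 2) → Profile n) t.castSucc.castSucc)
          ((Fin.snoc α c : Fin (T + 2) → Profile n) t.castSucc.succ)
          (Uh (prefixHist (Fin.snoc α c) t.castSucc))
        = P (α t.castSucc) (α t.succ) (Uh (prefixHist α t)) := by
    intro t
    rw [Fin.snoc_castSucc, Fin.succ_castSucc, Fin.snoc_castSucc, prefix_snoc_castSucc]
  have hlast :
      P ((Fin.snoc α c : Fin (T + 2) → Profile n) (Fin.last T).castSucc)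
          ((Fin.snoc α c : Fin (T + 2) → Profile n) ((Fin.last T).succ))
          (Uh (prefixHist (Fin.snoc α c) (Fin.last T)))
        = P (α (Fin.last T)) c (Uh ⟨T, α⟩) := by
    rw [Fin.snoc_castSucc, Fin.succ_last, Fin.snoc_last, prefix_snoc_last]
  rw [Finset.prod_congr rfl (fun t _ => hmid t), hlast, mul_assoc]

lemma pathStatic_snoc {n : ℕ} (P : Rule n) (Uhat : UtilProfile n)
    (π : Profile n → ℝ) (T : ℕ) (α : Fin (T + 1) → Profile n) (c : Profile n) :
    pathStatic P Uhat π (T + 1) (Fin.snoc α c)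
      = pathStatic P Uhat π T α * P (α (Fin.last T)) c Uhat := by
  unfold pathStatic
  rw [Fin.prod_univ_castSucc, snoc_zero']
  have hmid : ∀ t : Fin T,
      P ((Fin.snoc α c : Fin (T + 2) → Profile n) t.castSucc.castSucc)
          ((Fin.snoc α c : Fin (T + 2) → Profile n) t.castSucc.succ) Uhat
        = P (α t.castSucc) (α t.succ) Uhat := by
    intro t
    rw [Fin.snoc_castSucc, Fin.succ_castSucc, Fin.snoc_castSucc]
  have hlast : P ((Fin.snoc α c : Fin (T + 2) → Profile n) (Fin.last T).castSucc)
      ((Fin.snoc α c : Fin (T + 2) → Profile n) ((Fin.last T).succ)) Uhat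
      = P (α (Fin.last T)) c Uhat := by
    rw [Fin.snoc_castSucc, Fin.succ_last, Fin.snoc_last]
  rw [Finset.prod_congr rfl (fun t _ => hmid t), hlast, mul_assoc]

lemma update_mono {n : ℕ} {ah a' : Profile n} (i : Fin n) (hle : ∀ j, ah j ≤ a' j)
    {b b' : Bool} (hbb : b ≤ b') :
    ∀ j, Function.update ah i b j ≤ Function.update a' i b' j := by
  intro j
  by_cases hj : j = i
  · subst hj; simp [hbb]
  · rw [Function.update_of_ne hj, Function.update_of_ne hj]; exact hle j

lemma snoc_mono {n T : ℕ} {αh α : Fin (T + 1) → Profile n} (h : αh ≤ α)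
    {ch c : Profile n} (hc : ch ≤ c) :
    (Fin.snoc αh ch : Fin (T + 2) → Profile n) ≤ (Fin.snoc α c : Fin (T + 2) → Profile n) := by
  intro t
  refine Fin.lastCases ?_ ?_ t
  · rw [Fin.snoc_last, Fin.snoc_last]; exact hc
  · intro s
    rw [Fin.snoc_castSucc, Fin.snoc_castSucc]
    exact h s

lemma main_ind {n : ℕ} (Pvec : Fin n → Rule n)
    (hP : ∀ i, IsIndividual i (Pvec i) ∧ IsLocalRule i (Pvec i) ∧ IsMonotoneRule i (Pvec i))
    (Uh : Hist n → UtilProfile n) (Uhat : UtilProfile n) (hA : Aligned Uh Uhat)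
    (π : Profile n → ℝ) (hπ : IsProb π) :
    ∀ (T : ℕ) (fh f : (Fin (T + 1) → Profile n) → ℝ),
      (∀ α, 0 ≤ fh α) → (∀ α, 0 ≤ f α) →
      (∀ αh α, αh ≤ α → fh αh ≤ f α) →
      ∑ α : Fin (T + 1) → Profile n, pathStatic (asyncRule Pvec) Uhat π T α * fh α
        ≤ ∑ α : Fin (T + 1) → Profile n, pathHist (asyncRule Pvec) Uh π T α * f α := by
  intro T
  induction T with
  | zero =>
    intro fh f hfh hf hcross
    apply Finset.sum_le_sum
    intro α _
    simp only [pathStatic, pathHist, Finset.univ_eq_empty, Finset.prod_empty,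
      Fin.prod_univ_zero, mul_one]
    exact mul_le_mul_of_nonneg_left (hcross α α le_rfl) (hπ.1 _)
  | succ T ih =>
    intro fh f hfh hf hcross
    have hre : ∀ F : (Fin (T + 2) → Profile n) → ℝ,
        ∑ α : Fin (T + 2) → Profile n, F α
          = ∑ g : Fin (T + 1) → Profile n, ∑ c : Profile n, F (Fin.snoc g c) := by
      intro F
      have h1 : ∑ α : Fin (T + 2) → Profile n, F α
          = ∑ p : Profile n × (Fin (T + 1) → Profile n), F (Fin.snoc p.2 p.1) :=
        (Fintype.sum_equiv (Fin.snocEquiv (fun _ => Profile n))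
          (fun p => F (Fin.snoc p.2 p.1)) F (fun p => rfl)).symm
      rw [h1, Fintype.sum_prod_type]
      exact Finset.sum_comm
    rw [hre, hre]
    have hL : ∀ g : Fin (T + 1) → Profile n,
        ∑ c : Profile n, pathStatic (asyncRule Pvec) Uhat π (T + 1) (Fin.snoc g c)
            * fh (Fin.snoc g c)
          = pathStatic (asyncRule Pvec) Uhat π T g *
              ∑ c : Profile n, asyncRule Pvec (g (Fin.last T)) c Uhat * fh (Fin.snoc g c) := by
      intro g
      rw [Finset.mul_sum]
      refine Finset.sum_congr rfl fun c _ => ?_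
      rw [pathStatic_snoc, mul_assoc]
    have hR : ∀ g : Fin (T + 1) → Profile n,
        ∑ c : Profile n, pathHist (asyncRule Pvec) Uh π (T + 1) (Fin.snoc g c)
            * f (Fin.snoc g c)
          = pathHist (asyncRule Pvec) Uh π T g *
              ∑ c : Profile n, asyncRule Pvec (g (Fin.last T)) c (Uh ⟨T, g⟩) * f (Fin.snoc g c) := by
      intro g
      rw [Finset.mul_sum]
      refine Finset.sum_congr rfl fun c _ => ?_
      rw [pathHist_snoc, mul_assoc]
    rw [Finset.sum_congr rfl fun g _ => hL g, Finset.sum_congr rfl fun g _ => hR g]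
    apply ih
    · intro g
      exact Finset.sum_nonneg fun c _ =>
        mul_nonneg (async_nonneg Pvec hP _ _ _) (hfh _)
    · intro g
      exact Finset.sum_nonneg fun c _ =>
        mul_nonneg (async_nonneg Pvec hP _ _ _) (hf _)
    · intro gh g hg
      have := async_step Pvec hP Uh Uhat hA ⟨T, g⟩ (gh (Fin.last T))
        (fun j => hg (Fin.last T) j)
        (fun c => fh (Fin.snoc gh c)) (fun c => f (Fin.snoc g c))
        (fun i b b' hbb => hcross _ _
          (snoc_mono hg (fun j => update_mono i (fun j' => hg (Fin.last T) j') hbb j)))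
      exact this


end Try


/-- For an aligned history-dependent game with a local and monotone asynchronous
learning rule, every upper set of paths has at least as large probability under the
history-dependent path measure as under the static one. -/
theorem upper_set_dominance (n : ℕ) (hn : 1 ≤ n) (Pvec : Fin n → Rule n)
    (hP : ∀ i, IsIndividual i (Pvec i) ∧ IsLocalRule i (Pvec i) ∧ IsMonotoneRule i (Pvec i))
    (Uh : Hist n → UtilProfile n) (Uhat : UtilProfile n) (hA : Aligned Uh Uhat)
    (π : Profile n → ℝ) (hπ : IsProb π) (T : ℕ)
    (I : Set (Fin (T + 1) → Profile n)) (hI : IsUpperSet I) :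
    ∑ α ∈ Finset.univ.filter (fun α => α ∈ I), pathStatic (asyncRule Pvec) Uhat π T α
      ≤ ∑ α ∈ Finset.univ.filter (fun α => α ∈ I), pathHist (asyncRule Pvec) Uh π T α := by
  have key := main_ind Pvec hP Uh Uhat hA π hπ T
    (fun α => if α ∈ I then (1 : ℝ) else 0) (fun α => if α ∈ I then (1 : ℝ) else 0)
    (fun α => by positivity) (fun α => by positivity)
    (fun αh α hle => by
      by_cases hm : αh ∈ I
      · simp [hm, hI hle hm]
      · simp only [hm, if_false]
        positivity)
  rw [Finset.sum_filter, Finset.sum_filter]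
  calc ∑ α : Fin (T + 1) → Profile n,
        (if α ∈ I then pathStatic (asyncRule Pvec) Uhat π T α else 0)
      = ∑ α : Fin (T + 1) → Profile n,
          pathStatic (asyncRule Pvec) Uhat π T α * (if α ∈ I then (1 : ℝ) else 0) := by
        refine Finset.sum_congr rfl fun α _ => ?_
        by_cases hm : α ∈ I <;> simp [hm]
    _ ≤ ∑ α : Fin (T + 1) → Profile n,
          pathHist (asyncRule Pvec) Uh π T α * (if α ∈ I then (1 : ℝ) else 0) := key
    _ = ∑ α : Fin (T + 1) → Profile n,
          (if α ∈ I then pathHist (asyncRule Pvec) Uh π T α else 0) := by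
        refine Finset.sum_congr rfl fun α _ => ?_
        by_cases hm : α ∈ I <;> simp [hm]
end

section
/- The reference static CTI sharing game ĝ with utilities Û_i(a) = a_i(−c_i + Σ_{j∈N_i} a_j v̲) is an exact potential game, with potential function φ(a) = Σ_{i∈N} ((1−a_i)c_i + (a_i/2) Σ_{j∈N_i} a_j v̲). -/
open scoped Classical
open Finset

/-- The static game with utilities `U` is an exact potential game with potential `φ`. -/
def IsExactPotential {n : ℕ} (U : UtilProfile n) (φ : Profile n → ℝ) : Prop :=
  ∀ (i : Fin n) (a : Profile n) (b : Bool),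
    U i (Function.update a i b) - U i a = φ (Function.update a i b) - φ a

/-- The CTI sharing utility with cost vector `c` and CTI values `w`:
`U_i(a) = a_i(-c_i + ∑_{j ∈ N_i} a_j w_j)`. -/
noncomputable def ctiUtil {n : ℕ} (G : SimpleGraph (Fin n)) [DecidableRel G.Adj]
    (c : Fin n → ℝ) (w : Fin n → ℝ) : UtilProfile n :=
  fun i a => (if a i then (1 : ℝ) else 0) *
    (-(c i) + ∑ j ∈ G.neighborFinset i, (if a j then w j else 0))

/-- The potential function of the reference static CTI sharing game:
`φ(a) = ∑_i ((1-a_i)c_i + (a_i/2)∑_{j∈N_i} a_j v̲)`. -/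
noncomputable def ctiPot {n : ℕ} (G : SimpleGraph (Fin n)) [DecidableRel G.Adj]
    (c : Fin n → ℝ) (vlow : ℝ) (a : Profile n) : ℝ :=
  ∑ i : Fin n,
    ((1 - if a i then (1 : ℝ) else 0) * c i
      + (if a i then (1 : ℝ) else 0) / 2
          * ∑ j ∈ G.neighborFinset i, (if a j then vlow else 0))

/-- The reference static CTI sharing game is an exact potential game with potential
`φ(a) = ∑_i ((1-a_i)c_i + (a_i/2)∑_{j∈N_i} a_j v̲)`. -/
theorem cti_static_exact_potential (n : ℕ) (G : SimpleGraph (Fin n)) [DecidableRel G.Adj]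
    (c : Fin n → ℝ) (hc : ∀ i, 0 ≤ c i) (vlow : ℝ) :
    IsExactPotential (ctiUtil G c (fun _ => vlow)) (ctiPot G c vlow) := by

  intro i a b
  classical
  set d : ℝ := (if b then (1:ℝ) else 0) - (if a i then (1:ℝ) else 0) with hd
  set T : ℝ := ∑ j ∈ G.neighborFinset i, (if a j then vlow else 0) with hT
  have hptwise : ∀ j : Fin n,
      (if Function.update a i b j then vlow else 0) - (if a j then vlow else 0)
        = if j = i then d * vlow else 0 := by
    intro j
    by_cases hj : j = i
    · subst hj
      rw [if_pos rfl, Function.update_self, hd]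
      cases b <;> cases h : a j <;> simp [h] <;> ring
    · simp [Function.update_of_ne hj, hj]
  have hS : ∀ k : Fin n,
      (∑ j ∈ G.neighborFinset k, (if Function.update a i b j then vlow else 0))
        - ∑ j ∈ G.neighborFinset k, (if a j then vlow else 0)
      = if i ∈ G.neighborFinset k then d * vlow else 0 := by
    intro k
    rw [← Finset.sum_sub_distrib]
    simp_rw [hptwise]
    exact Finset.sum_ite_eq' _ _ _
  have hii : i ∉ G.neighborFinset i := by simp
  have hSi : (∑ j ∈ G.neighborFinset i, (if Function.update a i b j then vlow else 0)) = T := by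
    have h := hS i
    rw [if_neg hii] at h
    rw [hT]; linarith
  have hLHS : ctiUtil G c (fun _ => vlow) i (Function.update a i b)
      - ctiUtil G c (fun _ => vlow) i a = d * (-(c i) + T) := by
    simp only [ctiUtil, Function.update_self, hSi, ← hT, hd]
    ring
  have hterm : ∀ k : Fin n,
      ((1 - if Function.update a i b k then (1:ℝ) else 0) * c k
        + (if Function.update a i b k then (1:ℝ) else 0) / 2
            * ∑ j ∈ G.neighborFinset k, (if Function.update a i b j then vlow else 0))
      - ((1 - if a k then (1:ℝ) else 0) * c k
        + (if a k then (1:ℝ) else 0) / 2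
            * ∑ j ∈ G.neighborFinset k, (if a j then vlow else 0))
      = (if k = i then (-(d * c i) + d / 2 * T) else 0)
        + (if k ∈ G.neighborFinset i then (if a k then (1:ℝ) else 0) / 2 * (d * vlow) else 0) := by
    intro k
    by_cases hk : k = i
    · subst hk
      rw [if_pos rfl, if_neg hii, Function.update_self, hSi, hd, hT]
      ring
    · have hmem : (k ∈ G.neighborFinset i) ↔ (i ∈ G.neighborFinset k) := by
        simp [SimpleGraph.mem_neighborFinset, G.adj_comm]
      have hS' : (∑ j ∈ G.neighborFinset k, (if Function.update a i b j then vlow else 0))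
          = (∑ j ∈ G.neighborFinset k, (if a j then vlow else 0))
            + (if i ∈ G.neighborFinset k then d * vlow else 0) := by
        linarith [hS k]
      rw [Function.update_of_ne hk, if_neg hk, hS']
      simp only [hmem]
      by_cases hik : i ∈ G.neighborFinset k
      · simp only [if_pos hik]; ring
      · simp only [if_neg hik]; ring
  have hind : ∑ k : Fin n,
      (if k ∈ G.neighborFinset i then (if a k then (1:ℝ) else 0) / 2 * (d * vlow) else 0)
      = d / 2 * T := by
    rw [Finset.sum_ite_mem, Finset.univ_inter, hT, Finset.mul_sum]
    refine Finset.sum_congr rfl fun k _ => ?_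
    by_cases h : a k <;> simp [h] <;> ring
  have hRHS : ctiPot G c vlow (Function.update a i b) - ctiPot G c vlow a
      = d * (-(c i) + T) := by
    unfold ctiPot
    rw [← Finset.sum_sub_distrib]
    rw [Finset.sum_congr rfl (fun k _ => hterm k)]
    rw [Finset.sum_add_distrib, Finset.sum_ite_eq' Finset.univ i, if_pos (Finset.mem_univ i), hind]
    ring
  rw [hLHS, hRHS]
end

section
/- Let g be a CTI sharing game with finite lower value bound v̲, let ĝ be its reference static game, and let P be the asynchronous learning rule built from best response dynamics for every agent; let π be an initial distribution with full support on A. If every agent has at least one neighbor and v̲ > c_i/|N_i| for every agent i, then: (1) the all-ones profile 1⃗ is a strict Nash equilibrium of ĝ; (2) Pr(s(t;P_π) = 1⃗) ≥ Pr(s(t;P̂_π) = 1⃗) for every t ≥ 1; and (3) Pr(s(t;P_π) = 1⃗) > 0 for every t ≥ 1. -/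
open scoped Classical
open Finset

/-- The best-response set of agent `i` to `a_{-i}` given utilities `U`. -/
noncomputable def BRset {n : ℕ} (i : Fin n) (U : UtilProfile n) (a : Profile n) : Finset Bool :=
  Finset.univ.filter fun b => ∀ b' : Bool,
    U i (Function.update a i b') ≤ U i (Function.update a i b)

/-- Best response dynamics for agent `i` (ties broken uniformly at random). -/
noncomputable def bestResponse {n : ℕ} (i : Fin n) : Rule n :=
  fun a b U =>
    if ∀ j, j ≠ i → a j = b j then
      (if b i ∈ BRset i U a then (1 : ℝ) else 0) / (BRset i U a).card
    else 0

/-- The probability that the process governed by the path measure `μ` is at profile `a`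
at the final time of paths of length `T+1`. -/
noncomputable def prAt {n : ℕ} (T : ℕ) (μ : (Fin (T + 1) → Profile n) → ℝ)
    (a : Profile n) : ℝ :=
  ∑ α ∈ Finset.univ.filter (fun α : Fin (T + 1) → Profile n => α (Fin.last T) = a), μ α

/-- `a` is a strict Nash equilibrium of the static game with utilities `U`. -/
def IsStrictNash {n : ℕ} (U : UtilProfile n) (a : Profile n) : Prop :=
  ∀ (i : Fin n) (b : Bool), b ≠ a i → U i (Function.update a i b) < U i a

section CTIAux

variable {n : ℕ}

def prependH (a : Profile n) (h : Hist n) : Hist n := ⟨h.1 + 1, Fin.cons a h.2⟩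

def snocH (h : Hist n) (b : Profile n) : Hist n := ⟨h.1 + 1, Fin.snoc h.2 b⟩

lemma lastProf_snocH (h : Hist n) (b : Profile n) : lastProf (snocH h b) = b := by
  simp [lastProf, snocH]

lemma lastProf_prependH (a : Profile n) (h : Hist n) :
    lastProf (prependH a h) = lastProf h := by
  unfold lastProf prependH
  dsimp only
  rw [← Fin.succ_last, Fin.cons_succ]

lemma prependH_snocH (a : Profile n) (h : Hist n) (b : Profile n) :
    prependH a (snocH h b) = snocH (prependH a h) b := by
  unfold prependH snocH
  dsimp only
  rw [Fin.cons_snoc_eq_snoc_cons]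

lemma prependH_single (a b : Profile n) :
    prependH a ⟨0, fun _ => b⟩ = snocH ⟨0, fun _ => a⟩ b := by
  have hf : (Fin.cons a (fun _ => b) : Fin 2 → Profile n) = Fin.snoc (fun _ => a) b := by
    funext j
    refine Fin.cases ?_ (fun j' => ?_) j
    · rw [Fin.cons_zero]
      rw [show (0 : Fin 2) = Fin.castSucc (0 : Fin 1) by ext; simp, Fin.snoc_castSucc]
    · rw [Fin.cons_succ]
      rw [show Fin.succ j' = Fin.last 1 by ext; simp [Fin.val_succ, Fin.val_eq_zero],
        Fin.snoc_last]
  unfold prependH snocH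
  dsimp only
  exact Sigma.ext rfl (heq_of_eq hf)

noncomputable def Fh (P : Rule n) (Uh : Hist n → UtilProfile n) : ℕ → Hist n → ℝ
  | 0, h => if lastProf h = (fun _ => true : Profile n) then 1 else 0
  | r+1, h => ∑ b : Profile n, P (lastProf h) b (Uh h) * Fh P Uh r (snocH h b)

noncomputable def Fs (P : Rule n) (Uhat : UtilProfile n) : ℕ → Profile n → ℝ
  | 0, b => if b = (fun _ => true : Profile n) then 1 else 0
  | r+1, b => ∑ b' : Profile n, P b b' Uhat * Fs P Uhat r b'

lemma Fh_prepend (P : Rule n) (Uh : Hist n → UtilProfile n) (a : Profile n) :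
    ∀ (r : ℕ) (h : Hist n), Fh P (fun h' => Uh (prependH a h')) r h = Fh P Uh r (prependH a h)
  | 0, h => by simp only [Fh, lastProf_prependH]
  | r+1, h => by
    simp only [Fh, lastProf_prependH]
    refine Finset.sum_congr rfl fun b _ => ?_
    rw [Fh_prepend P Uh a r (snocH h b), prependH_snocH]

lemma Fh_const (P : Rule n) (Uhat : UtilProfile n) :
    ∀ (r : ℕ) (h : Hist n), Fh P (fun _ => Uhat) r h = Fs P Uhat r (lastProf h)
  | 0, h => rfl
  | r+1, h => by
    simp only [Fh, Fs]
    exact Finset.sum_congr rfl fun b _ => by rw [Fh_const P Uhat r, lastProf_snocH]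

lemma prefixHist_cons_zero {T : ℕ} (a : Profile n) (β : Fin (T + 1) → Profile n) :
    prefixHist (Fin.cons a β) (0 : Fin (T + 1)) = (⟨0, fun _ => a⟩ : Hist n) := by
  unfold prefixHist
  refine Sigma.ext (by simp) ((Fin.heq_fun_iff (by simp)).2 fun u => ?_)
  dsimp only
  have hu : Fin.castLE (Nat.succ_le_succ (0 : Fin (T + 1)).isLt.le) u = (0 : Fin (T + 2)) := by
    ext
    have h1 := u.isLt
    simp only [Fin.val_zero] at h1
    simp only [Fin.coe_castLE, Fin.val_zero]
    change (u : ℕ) = 0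
    omega
  rw [hu, Fin.cons_zero]

lemma prefixHist_cons_succ {T : ℕ} (a : Profile n) (β : Fin (T + 1) → Profile n) (s : Fin T) :
    prefixHist (Fin.cons a β) (Fin.succ s) = prependH a (prefixHist β s) := by
  unfold prefixHist prependH
  dsimp only
  refine Sigma.ext rfl (heq_of_eq ?_)
  funext u
  dsimp only
  refine Fin.cases ?_ (fun u' => ?_) u
  · have e1 : Fin.castLE (Nat.succ_le_succ (Fin.succ s).isLt.le)
        (0 : Fin ((Fin.succ s).1 + 1)) = (0 : Fin (T + 2)) := by
      ext; simp
    rw [e1, Fin.cons_zero, Fin.cons_zero]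
  · have e2 : Fin.castLE (Nat.succ_le_succ (Fin.succ s).isLt.le) (Fin.succ u')
        = Fin.succ (Fin.castLE (Nat.succ_le_succ s.isLt.le) u') := by
      ext; simp
    rw [e2, Fin.cons_succ, Fin.cons_succ]

end CTIAux

section CTIAux2

variable {n : ℕ}

lemma lemA (P : Rule n) :
    ∀ (T : ℕ) (Uh : Hist n → UtilProfile n) (π : Profile n → ℝ),
      prAt T (pathHist P Uh π T) (fun _ => true)
        = ∑ a : Profile n, π a * Fh P Uh T ⟨0, fun _ => a⟩
  | 0, Uh, π => by
    unfold prAt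
    rw [Finset.sum_filter, ← Equiv.sum_comp (Equiv.funUnique (Fin 1) (Profile n)).symm]
    refine Finset.sum_congr rfl fun a _ => ?_
    have hsa : ((Equiv.funUnique (Fin 1) (Profile n)).symm a) = fun _ => a := rfl
    rw [hsa]
    by_cases h : a = (fun _ => true : Profile n)
    · simp [h, pathHist, Fh, lastProf]
    · simp [h, Fh, lastProf]
  | T+1, Uh, π => by
    unfold prAt
    rw [Finset.sum_filter, ← Equiv.sum_comp (Fin.consEquiv (fun _ : Fin (T+2) => Profile n)),
      Fintype.sum_prod_type]
    refine Finset.sum_congr rfl fun a _ => ?_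
    have hce : ∀ β : Fin (T+1) → Profile n,
        (Fin.consEquiv (fun _ : Fin (T+2) => Profile n)) (a, β) = Fin.cons a β := fun _ => rfl
    have hlast : ∀ β : Fin (T+1) → Profile n,
        (Fin.cons a β : Fin (T+2) → Profile n) (Fin.last (T+1)) = β (Fin.last T) := by
      intro β; rw [← Fin.succ_last, Fin.cons_succ]
    have hpath : ∀ β : Fin (T+1) → Profile n,
        pathHist P Uh π (T+1) (Fin.cons a β : Fin (T+2) → Profile n)
          = π a * pathHist P (fun h' => Uh (prependH a h'))
              (fun b => P a b (Uh ⟨0, fun _ => a⟩)) T β := by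
      intro β
      unfold pathHist
      rw [Fin.prod_univ_succ]
      simp only [Fin.cons_zero, Fin.castSucc_zero, Fin.cons_succ, prefixHist_cons_zero,
        ← Fin.succ_castSucc, prefixHist_cons_succ]
    calc (∑ β : Fin (T+1) → Profile n,
            if (Fin.cons a β : Fin (T+2) → Profile n) (Fin.last (T+1)) = (fun _ => true : Profile n)
            then pathHist P Uh π (T+1) (Fin.cons a β : Fin (T+2) → Profile n) else 0)
        = ∑ β : Fin (T+1) → Profile n,
            π a * (if β (Fin.last T) = (fun _ => true : Profile n)
              then pathHist P (fun h' => Uh (prependH a h'))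
                (fun b => P a b (Uh ⟨0, fun _ => a⟩)) T β else 0) := by
          refine Finset.sum_congr rfl fun β _ => ?_
          rw [hlast, hpath]
          split_ifs <;> simp
      _ = π a * prAt T (pathHist P (fun h' => Uh (prependH a h'))
            (fun b => P a b (Uh ⟨0, fun _ => a⟩)) T) (fun _ => true) := by
          rw [← Finset.mul_sum]
          unfold prAt
          rw [Finset.sum_filter]
      _ = π a * ∑ b : Profile n, (P a b (Uh ⟨0, fun _ => a⟩))
            * Fh P (fun h' => Uh (prependH a h')) T ⟨0, fun _ => b⟩ := by
          rw [lemA P T]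
      _ = π a * Fh P Uh (T+1) ⟨0, fun _ => a⟩ := by
          congr 1
          simp only [Fh]
          refine Finset.sum_congr rfl fun b _ => ?_
          have hl : lastProf (⟨0, fun _ => a⟩ : Hist n) = a := rfl
          rw [hl, Fh_prepend, prependH_single]

end CTIAux2

section CTIAux3

variable {n : ℕ}

noncomputable def Sval (G : SimpleGraph (Fin n)) [DecidableRel G.Adj] (w : Fin n → ℝ)
    (i : Fin n) (a : Profile n) : ℝ :=
  ∑ j ∈ G.neighborFinset i, (if a j then w j else 0)

lemma ctiUtil_update_false (G : SimpleGraph (Fin n)) [DecidableRel G.Adj]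
    (c w : Fin n → ℝ) (i : Fin n) (a : Profile n) :
    ctiUtil G c w i (Function.update a i false) = 0 := by
  simp [ctiUtil]

lemma ctiUtil_update_true (G : SimpleGraph (Fin n)) [DecidableRel G.Adj]
    (c w : Fin n → ℝ) (i : Fin n) (a : Profile n) :
    ctiUtil G c w i (Function.update a i true) = -(c i) + Sval G w i a := by
  simp only [ctiUtil, Function.update_self, if_true, one_mul, Sval]
  congr 1
  refine Finset.sum_congr rfl fun j hj => ?_
  rw [Function.update_of_ne ((SimpleGraph.mem_neighborFinset G i j).mp hj).ne']

noncomputable def brProb (cc S : ℝ) : ℝ :=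
  if cc < S then 1 else if S < cc then 0 else 1/2

lemma brProb_nonneg (cc S : ℝ) : 0 ≤ brProb cc S := by
  unfold brProb; split_ifs <;> norm_num

lemma brProb_le_one (cc S : ℝ) : brProb cc S ≤ 1 := by
  unfold brProb; split_ifs <;> norm_num

lemma brProb_mono (cc : ℝ) {S S' : ℝ} (h : S ≤ S') : brProb cc S ≤ brProb cc S' := by
  unfold brProb
  split_ifs <;> linarith

lemma BRset_eq (G : SimpleGraph (Fin n)) [DecidableRel G.Adj]
    (c w : Fin n → ℝ) (i : Fin n) (a : Profile n) :
    BRset i (ctiUtil G c w) a =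
      if c i < Sval G w i a then {true}
      else if Sval G w i a < c i then {false} else Finset.univ := by
  have hT := ctiUtil_update_true G c w i a
  have hF := ctiUtil_update_false G c w i a
  have keyT : (∀ b' : Bool, ctiUtil G c w i (Function.update a i b')
        ≤ ctiUtil G c w i (Function.update a i true))
      ↔ 0 ≤ -(c i) + Sval G w i a := by
    simp [Bool.forall_bool, hT, hF]
  have keyF : (∀ b' : Bool, ctiUtil G c w i (Function.update a i b')
        ≤ ctiUtil G c w i (Function.update a i false))
      ↔ -(c i) + Sval G w i a ≤ 0 := by
    simp [Bool.forall_bool, hT, hF]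
  ext b
  simp only [BRset, Finset.mem_filter, Finset.mem_univ, true_and]
  cases b
  · rw [keyF]
    rcases lt_trichotomy (c i) (Sval G w i a) with h | h | h
    · rw [if_pos h]
      exact iff_of_false (by linarith) (by simp)
    · rw [if_neg (by linarith), if_neg (by linarith)]
      exact iff_of_true (by linarith) (Finset.mem_univ _)
    · rw [if_neg (by linarith), if_pos h]
      exact iff_of_true (by linarith) (by simp)
  · rw [keyT]
    rcases lt_trichotomy (c i) (Sval G w i a) with h | h | h
    · rw [if_pos h]
      exact iff_of_true (by linarith) (by simp)
    · rw [if_neg (by linarith), if_neg (by linarith)]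
      exact iff_of_true (by linarith) (Finset.mem_univ _)
    · rw [if_neg (by linarith), if_pos h]
      exact iff_of_false (by linarith) (by simp)

lemma bestResponse_true_eq (G : SimpleGraph (Fin n)) [DecidableRel G.Adj]
    (c w : Fin n → ℝ) (i : Fin n) (a : Profile n) :
    bestResponse i a (Function.update a i true) (ctiUtil G c w)
      = brProb (c i) (Sval G w i a) := by
  unfold bestResponse
  rw [if_pos (fun j hj => (Function.update_of_ne hj _ _).symm)]
  rw [Function.update_self, BRset_eq, brProb]
  split_ifs <;> simp_all [Finset.card_univ]

lemma bestResponse_false_eq (G : SimpleGraph (Fin n)) [DecidableRel G.Adj]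
    (c w : Fin n → ℝ) (i : Fin n) (a : Profile n) :
    bestResponse i a (Function.update a i false) (ctiUtil G c w)
      = 1 - brProb (c i) (Sval G w i a) := by
  unfold bestResponse
  rw [if_pos (fun j hj => (Function.update_of_ne hj _ _).symm)]
  rw [Function.update_self, BRset_eq, brProb]
  split_ifs <;> simp_all [Finset.card_univ] <;> norm_num

lemma bestResponse_sum (i : Fin n) (a : Profile n) (U : UtilProfile n) (f : Profile n → ℝ) :
    ∑ b : Profile n, bestResponse i a b U * f b
      = bestResponse i a (Function.update a i true) U * f (Function.update a i true)
        + bestResponse i a (Function.update a i false) U * f (Function.update a i false) := by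
  have hne : Function.update a i true ≠ Function.update a i false := by
    intro hEq
    have h := congrFun hEq i
    simp [Function.update_self] at h
  have hpair : ∑ b ∈ ({Function.update a i true, Function.update a i false} :
        Finset (Profile n)), bestResponse i a b U * f b
      = bestResponse i a (Function.update a i true) U * f (Function.update a i true)
        + bestResponse i a (Function.update a i false) U * f (Function.update a i false) :=
    Finset.sum_pair hne
  rw [← hpair]
  symm
  apply Finset.sum_subset (Finset.subset_univ _)
  intro b _ hb
  have hzero : bestResponse i a b U = 0 := by
    unfold bestResponse
    rw [if_neg]
    intro hall
    have hupd : b = Function.update a i (b i) := by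
      funext j
      by_cases hj : j = i
      · subst hj; rw [Function.update_self]
      · rw [Function.update_of_ne hj]; exact (hall j hj).symm
    apply hb
    cases hbi : b i
    · rw [Finset.mem_insert, Finset.mem_singleton]
      right
      rw [hupd, hbi]
    · rw [Finset.mem_insert, Finset.mem_singleton]
      left
      rw [hupd, hbi]
  rw [hzero, zero_mul]

lemma Sval_mono (G : SimpleGraph (Fin n)) [DecidableRel G.Adj] (i : Fin n)
    {a b : Profile n} (hab : ∀ j, b j = true → a j = true)
    {vlow : ℝ} {w : Fin n → ℝ} (hw : ∀ j, vlow ≤ w j) (h0 : 0 ≤ vlow) :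
    Sval G (fun _ => vlow) i b ≤ Sval G w i a := by
  refine Finset.sum_le_sum fun j _ => ?_
  by_cases hbj : b j = true
  · rw [if_pos hbj, if_pos (hab j hbj)]
    exact hw j
  · rw [if_neg hbj]
    by_cases haj : a j = true
    · rw [if_pos haj]; linarith [hw j]
    · rw [if_neg haj]

end CTIAux3

section CTIAux4

variable {n : ℕ}

lemma bestResponse_nonneg (i : Fin n) (a b : Profile n) (U : UtilProfile n) :
    0 ≤ bestResponse i a b U := by
  unfold bestResponse
  split_ifs <;> positivity

lemma asyncRule_nonneg (a b : Profile n) (U : UtilProfile n) :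
    0 ≤ asyncRule (fun i => bestResponse i) a b U := by
  unfold asyncRule
  apply mul_nonneg (by positivity)
  exact Finset.sum_nonneg fun i _ => bestResponse_nonneg i a b U

lemma lemC (G : SimpleGraph (Fin n)) [DecidableRel G.Adj]
    (c : Fin n → ℝ) (v : Fin n → Hist n → ℝ)
    (vlow : ℝ) (hlow : ∀ j h, vlow ≤ v j h) (h0 : 0 ≤ vlow) :
    ∀ (r : ℕ) (h : Hist n) (b : Profile n), (∀ j, b j = true → lastProf h j = true) →
      Fs (asyncRule fun i => bestResponse i) (ctiUtil G c fun _ => vlow) r b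
        ≤ Fh (asyncRule fun i => bestResponse i) (fun h' => ctiUtil G c fun j => v j h') r h
  | 0, h, b, hb => by
    simp only [Fs, Fh]
    by_cases h1 : b = (fun _ => true : Profile n)
    · have h2 : lastProf h = (fun _ => true : Profile n) := by
        funext j
        exact hb j (congrFun h1 j)
      rw [if_pos h1, if_pos h2]
    · rw [if_neg h1]
      split_ifs <;> norm_num
  | r+1, h, b, hb => by
    simp only [Fs, Fh, asyncRule]
    have swap : ∀ (Q : Fin n → Profile n → ℝ) (F : Profile n → ℝ),
        (∑ b' : Profile n, ((1/(n:ℝ)) * ∑ i : Fin n, Q i b') * F b')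
          = (1/(n:ℝ)) * ∑ i : Fin n, ∑ b' : Profile n, Q i b' * F b' := by
      intro Q F
      have e1 : ∀ b' : Profile n, ((1/(n:ℝ)) * ∑ i : Fin n, Q i b') * F b'
          = (1/(n:ℝ)) * ∑ i : Fin n, Q i b' * F b' := by
        intro b'; rw [mul_assoc, Finset.sum_mul]
      rw [Finset.sum_congr rfl fun b' _ => e1 b', ← Finset.mul_sum, Finset.sum_comm]
    rw [swap, swap]
    refine mul_le_mul_of_nonneg_left ?_ (by positivity)
    refine Finset.sum_le_sum fun i _ => ?_
    rw [bestResponse_sum i b (ctiUtil G c fun _ => vlow)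
        (Fs (asyncRule fun i => bestResponse i) (ctiUtil G c fun _ => vlow) r),
      bestResponse_sum i (lastProf h) (ctiUtil G c fun j => v j h)
        (fun b' => Fh (asyncRule fun i => bestResponse i)
          (fun h' => ctiUtil G c fun j => v j h') r (snocH h b')),
      bestResponse_true_eq, bestResponse_false_eq, bestResponse_true_eq, bestResponse_false_eq]
    have hor : ∀ (x y : Bool), (x = true → y = true) → ∀ j,
        Function.update b i x j = true → Function.update (lastProf h) i y j = true := by
      intro x y hxy j hj
      by_cases hji : j = i
      · subst hji
        rw [Function.update_self] at hj ⊢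
        exact hxy hj
      · rw [Function.update_of_ne hji] at hj ⊢
        exact hb j hj
    have ht := lemC G c v vlow hlow h0 r (snocH h (Function.update (lastProf h) i true))
      (Function.update b i true)
      (fun j hj => by rw [lastProf_snocH]; exact hor true true (fun h => h) j hj)
    have hf := lemC G c v vlow hlow h0 r (snocH h (Function.update (lastProf h) i false))
      (Function.update b i false)
      (fun j hj => by rw [lastProf_snocH]; exact hor false false (fun h => h) j hj)
    have hft := lemC G c v vlow hlow h0 r (snocH h (Function.update (lastProf h) i true))
      (Function.update b i false)
      (fun j hj => by rw [lastProf_snocH]; exact hor false true (fun h => by simp at h) j hj)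
    have hpp : brProb (c i) (Sval G (fun _ => vlow) i b)
        ≤ brProb (c i) (Sval G (fun j => v j h) i (lastProf h)) :=
      brProb_mono _ (Sval_mono G i hb (fun j => hlow j h) h0)
    have hp0 := brProb_nonneg (c i) (Sval G (fun _ => vlow) i b)
    have hp1 := brProb_le_one (c i) (Sval G (fun j => v j h) i (lastProf h))
    nlinarith [mul_nonneg (sub_nonneg.2 hpp) (sub_nonneg.2 hft),
      mul_nonneg hp0 (sub_nonneg.2 ht),
      mul_nonneg (sub_nonneg.2 hp1) (sub_nonneg.2 hf)]

lemma async_one (hn : 1 ≤ n) (G : SimpleGraph (Fin n)) [DecidableRel G.Adj]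
    (c : Fin n → ℝ) (w : Fin n → ℝ) (vlow : ℝ)
    (hdeg : ∀ i, 0 < (G.neighborFinset i).card)
    (hval : ∀ i, c i / (G.neighborFinset i).card < vlow)
    (hw : ∀ j, vlow ≤ w j) :
    asyncRule (fun i => bestResponse i) (fun _ => true) (fun _ => true) (ctiUtil G c w) = 1 := by
  unfold asyncRule
  have hterm : ∀ i : Fin n,
      bestResponse i (fun _ => true) (fun _ => true) (ctiUtil G c w) = 1 := by
    intro i
    have hcard : (0:ℝ) < ((G.neighborFinset i).card : ℝ) := by exact_mod_cast hdeg i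
    have h1 : c i < vlow * ((G.neighborFinset i).card : ℝ) := (div_lt_iff₀ hcard).mp (hval i)
    have h2 : ((G.neighborFinset i).card : ℝ) * vlow ≤ Sval G w i (fun _ => true) := by
      have h3 := Finset.card_nsmul_le_sum (G.neighborFinset i)
        (fun j => if (fun _ => true : Profile n) j then w j else 0) vlow
        (fun j _ => by simpa using hw j)
      simpa [Sval, nsmul_eq_mul] using h3
    have hS : c i < Sval G w i (fun _ => true) := by nlinarith
    unfold bestResponse
    rw [if_pos (fun j _ => rfl)]
    rw [BRset_eq, if_pos hS]
    simp
  rw [Finset.sum_congr rfl fun i _ => hterm i, Finset.sum_const, Finset.card_univ,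
    Fintype.card_fin, nsmul_eq_mul, mul_one]
  have hne : (n:ℝ) ≠ 0 := by
    have : (0:ℝ) < n := by exact_mod_cast hn
    linarith
  field_simp

end CTIAux4

/-- CTI sharing under best response dynamics: if every firm has a neighbor and
`v̲ > c_i/|N_i|` for all `i`, then all-sharing is a strict Nash equilibrium of the
reference static game, the history-dependent probability of all-sharing dominates the
static one at every time, and is positive at every time for full-support `π`. -/
theorem cti_best_response (n : ℕ) (hn : 1 ≤ n) (G : SimpleGraph (Fin n)) [DecidableRel G.Adj]
    (c : Fin n → ℝ) (hc : ∀ i, 0 ≤ c i)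
    (v : Fin n → Hist n → ℝ) (hv : ∀ j h, 0 ≤ v j h)
    (vlow : ℝ) (hlow : ∀ j h, vlow ≤ v j h)
    (hdeg : ∀ i, 0 < (G.neighborFinset i).card)
    (hval : ∀ i, c i / (G.neighborFinset i).card < vlow)
    (π : Profile n → ℝ) (hπ : IsProb π) (hfull : ∀ a, 0 < π a) :
    IsStrictNash (ctiUtil G c (fun _ => vlow)) (fun _ => true) ∧
    (∀ t : ℕ,
      prAt t (pathStatic (asyncRule fun i => bestResponse i)
          (ctiUtil G c (fun _ => vlow)) π t) (fun _ => true)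
        ≤ prAt t (pathHist (asyncRule fun i => bestResponse i)
          (fun h => ctiUtil G c (fun j => v j h)) π t) (fun _ => true)) ∧
    (∀ t : ℕ,
      0 < prAt t (pathHist (asyncRule fun i => bestResponse i)
          (fun h => ctiUtil G c (fun j => v j h)) π t) (fun _ => true)) := by

  have h0 : 0 ≤ vlow := by
    have i0 : Fin n := ⟨0, hn⟩
    have hd : (0:ℝ) ≤ c i0 / ((G.neighborFinset i0).card : ℝ) :=
      div_nonneg (hc i0) (Nat.cast_nonneg _)
    linarith [hval i0]
  refine ⟨?_, ?_, ?_⟩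
  · -- strict Nash
    intro i bb hbb
    have hbf : bb = false := by
      cases bb
      · rfl
      · exact absurd rfl hbb
    subst hbf
    rw [ctiUtil_update_false]
    have hone : ctiUtil G c (fun _ => vlow) i (fun _ => true)
        = -(c i) + ((G.neighborFinset i).card : ℝ) * vlow := by
      simp [ctiUtil, Finset.sum_const, nsmul_eq_mul]
    rw [hone]
    have hcard : (0:ℝ) < ((G.neighborFinset i).card : ℝ) := by exact_mod_cast hdeg i
    have h1 : c i < vlow * ((G.neighborFinset i).card : ℝ) := (div_lt_iff₀ hcard).mp (hval i)
    nlinarith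
  · -- domination
    intro t
    have hstat : pathStatic (asyncRule fun i => bestResponse i) (ctiUtil G c fun _ => vlow) π t
        = pathHist (asyncRule fun i => bestResponse i)
            (fun _ => ctiUtil G c fun _ => vlow) π t := rfl
    rw [hstat, lemA, lemA]
    refine Finset.sum_le_sum fun a _ => ?_
    refine mul_le_mul_of_nonneg_left ?_ (le_of_lt (hfull a))
    rw [Fh_const]
    exact lemC G c v vlow hlow h0 t ⟨0, fun _ => a⟩ a (fun j hj => hj)
  · -- positivity
    intro t
    unfold prAt
    have hmem : (fun _ : Fin (t+1) => (fun _ => true : Profile n))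
        ∈ Finset.univ.filter
          (fun α : Fin (t+1) → Profile n => α (Fin.last t) = fun _ => true) := by
      simp
    refine lt_of_lt_of_le ?_ (Finset.single_le_sum (fun α _ => ?_) hmem)
    · unfold pathHist
      have hprod : (∏ s : Fin t, (asyncRule fun i => bestResponse i)
          ((fun _ : Fin (t+1) => (fun _ => true : Profile n)) s.castSucc)
          ((fun _ : Fin (t+1) => (fun _ => true : Profile n)) s.succ)
          ((fun h => ctiUtil G c fun j => v j h)
            (prefixHist (fun _ : Fin (t+1) => (fun _ => true : Profile n)) s))) = 1 :=
        Finset.prod_eq_one fun s _ =>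
          async_one hn G c (fun j => v j _) vlow hdeg hval (fun j => hlow j _)
      rw [hprod, mul_one]
      exact hfull _
    · exact mul_nonneg (le_of_lt (hfull _))
        (Finset.prod_nonneg fun s _ => asyncRule_nonneg _ _ _)
end
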